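/- arXiv:2205.02004 — 9 statements merged into one kernel-verified Lean document; each statement's English description precedes it below -/
import Mathlib

section
/- For any graph G with non-backtracking matrix B and any function v on oriented edges, (B*Bv)_{k→l} = (d_l − 2)·(Σ_i a_{il} v_{i→l}) + v_{k→l}, where B* is the conjugate transpose of B, d_l is the degree of l, and a_{il} is the adjacency indicator. -/
open SimpleGraph Matrix

/-- The non-backtracking matrix of a simple graph, indexed by oriented edges (darts). -/
def nbMatrix {V : Type} [Fintype V] [DecidableEq V] (G : SimpleGraph V) [DecidableRel G.Adj] :
    Matrix G.Dart G.Dart ℂ :=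
  fun d e => if e.toProd.2 = d.toProd.1 ∧ e.toProd.1 ≠ d.toProd.2 then 1 else 0

/-- "v into k": the sum of `v` over all oriented edges pointing into `k`. -/
noncomputable def vInto {V : Type} [Fintype V] [DecidableEq V] (G : SimpleGraph V) [DecidableRel G.Adj]
    (v : G.Dart → ℂ) (k : V) : ℂ :=
  ∑ e : G.Dart, if e.toProd.2 = k then v e else 0

/-- "v from k": the sum of `v` over all oriented edges pointing out of `k`. -/
noncomputable def vFrom {V : Type} [Fintype V] [DecidableEq V] (G : SimpleGraph V) [DecidableRel G.Adj]
    (v : G.Dart → ℂ) (k : V) : ℂ :=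
  ∑ e : G.Dart, if e.toProd.1 = k then v e else 0

/-- `(B*Bv)_{k→l} = (d_l − 2)·(v into l) + v_{k→l}`. -/
theorem conjTranspose_mul_nbMatrix_mulVec {V : Type} [Fintype V] [DecidableEq V]
    (G : SimpleGraph V) [DecidableRel G.Adj] (v : G.Dart → ℂ) (d : G.Dart) :
    (((nbMatrix G)ᴴ * nbMatrix G).mulVec v) d =
      ((G.degree d.toProd.2 : ℂ) - 2) * vInto G v d.toProd.2 + v d := by
  classical
  set k := d.toProd.1 with hk
  set l := d.toProd.2 with hl
  -- helper: sum of v over darts into l avoiding source m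
  have helper : ∀ (m : V) (h : G.Adj m l),
      (∑ e : G.Dart, if e.toProd.2 = l ∧ e.toProd.1 ≠ m then v e else 0) =
        vInto G v l - v (SimpleGraph.Dart.mk (m, l) h) := by
    intro m h
    have hsplit : ∀ e : G.Dart,
        (if e.toProd.2 = l then v e else 0) =
          (if e.toProd.2 = l ∧ e.toProd.1 ≠ m then v e else 0) +
          (if e.toProd.2 = l ∧ e.toProd.1 = m then v e else 0) := by
      intro e
      by_cases h2 : e.toProd.2 = l <;> by_cases h1 : e.toProd.1 = m <;> simp [h1, h2]
    have hsingle : (∑ e : G.Dart, if e.toProd.2 = l ∧ e.toProd.1 = m then v e else 0) =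
        v (SimpleGraph.Dart.mk (m, l) h) := by
      rw [Finset.sum_eq_single (SimpleGraph.Dart.mk (m, l) h)]
      · simp
      · intro e _ hne
        rw [if_neg]
        rintro ⟨h2, h1⟩
        exact hne (SimpleGraph.Dart.ext _ _ (Prod.ext h1 h2))
      · simp
    rw [vInto]
    simp_rw [hsplit]
    rw [Finset.sum_add_distrib, hsingle]
    ring
  have hadjd : G.Adj k l := d.adj
  -- unfold mulVec and swap sums
  rw [Matrix.mulVec, Matrix.mul_apply_eq_vecMul]
  show (∑ e : G.Dart, (∑ f : G.Dart, ((nbMatrix G)ᴴ) d f * nbMatrix G f e) * v e) = _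
  have step1 : (∑ e : G.Dart, (∑ f : G.Dart, ((nbMatrix G)ᴴ) d f * nbMatrix G f e) * v e) =
      ∑ f : G.Dart, if f.toProd.1 = l ∧ f.toProd.2 ≠ k then
        (∑ e : G.Dart, if e.toProd.2 = f.toProd.1 ∧ e.toProd.1 ≠ f.toProd.2 then v e else 0)
        else 0 := by
    simp_rw [Finset.sum_mul, Matrix.conjTranspose_apply, nbMatrix, apply_ite star, star_one,
      star_zero]
    rw [Finset.sum_comm]
    refine Finset.sum_congr rfl fun f _ => ?_
    by_cases hf : d.toProd.2 = f.toProd.1 ∧ d.toProd.1 ≠ f.toProd.2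
    · have hf' : f.toProd.1 = l ∧ f.toProd.2 ≠ k := ⟨hf.1.symm, fun hh => hf.2 hh.symm⟩
      simp only [if_pos hf, if_pos hf', one_mul]
      refine Finset.sum_congr rfl fun e _ => ?_
      by_cases he : e.toProd.2 = f.toProd.1 ∧ e.toProd.1 ≠ f.toProd.2 <;> simp [he]
    · have hf' : ¬(f.toProd.1 = l ∧ f.toProd.2 ≠ k) := by
        rintro ⟨h1, h2⟩; exact hf ⟨h1.symm, fun hh => h2 hh.symm⟩
      simp only [if_neg hf, if_neg hf', zero_mul]
      exact Finset.sum_eq_zero fun e _ => by simp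
  rw [step1]
  -- rewrite summand using helper
  have step2 : (∑ f : G.Dart, if f.toProd.1 = l ∧ f.toProd.2 ≠ k then
        (∑ e : G.Dart, if e.toProd.2 = f.toProd.1 ∧ e.toProd.1 ≠ f.toProd.2 then v e else 0)
        else 0) =
      ∑ f : G.Dart, if f.toProd.1 = l ∧ f.toProd.2 ≠ k then (vInto G v l - v f.symm) else 0 := by
    refine Finset.sum_congr rfl fun f _ => ?_
    by_cases hf : f.toProd.1 = l ∧ f.toProd.2 ≠ k
    · rw [if_pos hf, if_pos hf]
      have hadj : G.Adj f.toProd.2 l := hf.1 ▸ f.adj.symm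
      have := helper f.toProd.2 hadj
      simp_rw [hf.1] at this ⊢
      rw [this]
      congr 1
      congr 1
      exact SimpleGraph.Dart.ext _ _ (Prod.ext rfl hf.1.symm)
    · rw [if_neg hf, if_neg hf]
  rw [step2]
  rw [Finset.sum_ite, Finset.sum_const_zero, add_zero, Finset.sum_sub_distrib,
    Finset.sum_const, nsmul_eq_mul]
  -- card of the filter
  have hcardfull : (Finset.univ.filter (fun f : G.Dart => f.toProd.1 = l)).card = G.degree l :=
    G.dart_fst_fiber_card_eq_degree l
  have hfil : (Finset.univ.filter (fun f : G.Dart => f.toProd.1 = l ∧ f.toProd.2 ≠ k)) =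
      (Finset.univ.filter (fun f : G.Dart => f.toProd.1 = l)).erase d.symm := by
    ext f
    simp only [Finset.mem_filter, Finset.mem_erase, Finset.mem_univ, true_and]
    constructor
    · rintro ⟨h1, h2⟩
      refine ⟨fun hh => h2 ?_, h1⟩
      rw [hh]; rfl
    · rintro ⟨hne, h1⟩
      refine ⟨h1, fun h2 => hne ?_⟩
      exact SimpleGraph.Dart.ext _ _ (Prod.ext h1 h2)
  have hmem : d.symm ∈ Finset.univ.filter (fun f : G.Dart => f.toProd.1 = l) := by
    simp [SimpleGraph.Dart.symm, hl]
  have hcard : (Finset.univ.filter (fun f : G.Dart => f.toProd.1 = l ∧ f.toProd.2 ≠ k)).card =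
      G.degree l - 1 := by
    rw [hfil, Finset.card_erase_of_mem hmem, hcardfull]
  -- second sum via the symm bijection
  have hsymm : (∑ f ∈ Finset.univ.filter (fun f : G.Dart => f.toProd.1 = l ∧ f.toProd.2 ≠ k),
      v f.symm) = ∑ e : G.Dart, if e.toProd.2 = l ∧ e.toProd.1 ≠ k then v e else 0 := by
    rw [Finset.sum_filter]
    refine Fintype.sum_bijective SimpleGraph.Dart.symm
      (Function.Involutive.bijective (fun e => SimpleGraph.Dart.symm_symm e)) _ _ fun f => ?_
    simp [SimpleGraph.Dart.symm]
    congr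
  rw [hcard, hsymm, helper k hadjd]
  have hdk : SimpleGraph.Dart.mk (k, l) hadjd = d := SimpleGraph.Dart.ext _ _ rfl
  rw [hdk]
  have hdeg1 : 1 ≤ G.degree l := by
    rw [← hcardfull]
    exact Finset.card_pos.mpr ⟨d.symm, hmem⟩
  have : ((G.degree l - 1 : ℕ) : ℂ) = (G.degree l : ℂ) - 1 := by
    push_cast [hdeg1]; ring
  rw [this]
  ring
end

section
/- If Bv = λv, then for every node k, (d_k − 1)·(Σ_i a_{ik} v_{i→k}) = λ·(Σ_i a_{ik} v_{k→i}). -/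
open SimpleGraph Matrix

/-- If `Bv = λv` then `(d_k − 1)·(v into k) = λ·(v from k)` for every node k. -/
theorem degree_sub_one_mul_vInto {V : Type} [Fintype V] [DecidableEq V]
    (G : SimpleGraph V) [DecidableRel G.Adj] (v : G.Dart → ℂ) (lam : ℂ)
    (hv : (nbMatrix G).mulVec v = lam • v) (k : V) :
    ((G.degree k : ℂ) - 1) * vInto G v k = lam * vFrom G v k := by
  classical
  have key : ∀ e : G.Dart, (nbMatrix G).mulVec v e = lam * v e := fun e => congrFun hv e
  have hR : ∑ e : G.Dart, (if e.toProd.1 = k then (nbMatrix G).mulVec v e else 0)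
      = lam * vFrom G v k := by
    rw [vFrom, Finset.mul_sum]
    refine Finset.sum_congr rfl fun e _ => ?_
    rw [key e]; split <;> simp
  rw [← hR]
  simp only [mulVec, dotProduct, nbMatrix]
  have step1 : ∀ e : G.Dart,
      (if e.toProd.1 = k then ∑ f : G.Dart, (if f.toProd.2 = e.toProd.1 ∧ f.toProd.1 ≠ e.toProd.2 then (1:ℂ) else 0) * v f else 0)
      = ∑ f : G.Dart, (if e.toProd.1 = k ∧ f.toProd.2 = k ∧ f.toProd.1 ≠ e.toProd.2 then v f else 0) := by
    intro e
    by_cases he : e.toProd.1 = k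
    · rw [if_pos he]
      refine Finset.sum_congr rfl fun f _ => ?_
      by_cases hc : f.toProd.2 = e.toProd.1 ∧ f.toProd.1 ≠ e.toProd.2
      · rw [if_pos hc, if_pos ⟨he, he ▸ hc.1, hc.2⟩, one_mul]
      · rw [if_neg hc, if_neg (fun h => hc ⟨he ▸ h.2.1, h.2.2⟩), zero_mul]
    · rw [if_neg he, eq_comm, Finset.sum_eq_zero]
      intro f _
      rw [if_neg (fun hc => he hc.1)]
  rw [Finset.sum_congr rfl fun e _ => step1 e, Finset.sum_comm]
  rw [vInto, Finset.mul_sum]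
  refine Finset.sum_congr rfl fun f _ => ?_
  by_cases hf : f.toProd.2 = k
  · rw [if_pos hf]
    symm
    have hdeg : 1 ≤ G.degree k := by
      rw [← SimpleGraph.card_neighborSet_eq_degree]
      have : f.toProd.1 ∈ G.neighborSet k := by
        have := f.adj; rw [hf] at this; exact this.symm
      exact Fintype.card_pos_iff.mpr ⟨⟨_, this⟩⟩
    have hcard : (Finset.univ.filter fun e : G.Dart => e.toProd.1 = k ∧ f.toProd.1 ≠ e.toProd.2).card
        = G.degree k - 1 := by
      have hsub : (Finset.univ.filter fun e : G.Dart => e.toProd.1 = k ∧ f.toProd.1 ≠ e.toProd.2)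
          = (Finset.univ.filter fun e : G.Dart => e.toProd.1 = k) \
            {SimpleGraph.Dart.mk (k, f.toProd.1) (by have := f.adj; rw [hf] at this; exact this.symm)} := by
        ext e
        simp only [Finset.mem_filter, Finset.mem_sdiff, Finset.mem_univ, true_and,
          Finset.mem_singleton]
        constructor
        · rintro ⟨h1, h2⟩
          exact ⟨h1, fun he => h2 (by rw [he])⟩
        · rintro ⟨h1, h2⟩
          refine ⟨h1, fun he => h2 ?_⟩
          exact SimpleGraph.Dart.ext _ _ (Prod.ext h1 he.symm)
      rw [hsub, Finset.card_sdiff_of_subset]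
      · rw [SimpleGraph.dart_fst_fiber_card_eq_degree, Finset.card_singleton]
      · simp [Finset.singleton_subset_iff]
    calc ∑ e : G.Dart, (if e.toProd.1 = k ∧ f.toProd.2 = k ∧ f.toProd.1 ≠ e.toProd.2 then v f else 0)
        = ∑ e : G.Dart, (if e.toProd.1 = k ∧ f.toProd.1 ≠ e.toProd.2 then v f else 0) := by
          refine Finset.sum_congr rfl fun e _ => ?_
          by_cases hc : e.toProd.1 = k ∧ f.toProd.1 ≠ e.toProd.2
          · rw [if_pos hc, if_pos ⟨hc.1, hf, hc.2⟩]
          · rw [if_neg hc, if_neg (fun h => hc ⟨h.1, h.2.2⟩)]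
      _ = ((G.degree k - 1 : ℕ) : ℂ) * v f := by
          rw [Finset.sum_ite, Finset.sum_const_zero, add_zero, Finset.sum_const, hcard,
            nsmul_eq_mul]
      _ = ((G.degree k : ℂ) - 1) * v f := by
          rw [Nat.cast_sub hdeg, Nat.cast_one]
  · rw [if_neg hf, mul_zero, Finset.sum_eq_zero]
    intro e _; rw [if_neg (fun h => hf h.2.1)]
end

section
/- Let G be a connected graph with minimum degree at least 2 and m > n. If Bv = v for the non-backtracking matrix B, then for every node k, Σ_i a_{ik} v_{i→k} = 0, and for every edge k−l, v_{k→l} + v_{l→k} = 0. -/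
open SimpleGraph Matrix

/-- If Bv = v in a connected graph with minimum degree ≥ 2 and m > n, then the sum of v
into every node vanishes and v is antisymmetric on every edge. -/
theorem fixed_vector_system {V : Type} [Fintype V] [DecidableEq V]
    (G : SimpleGraph V) [DecidableRel G.Adj]
    (hconn : G.Connected) (hmin : ∀ x : V, 2 ≤ G.degree x)
    (hmn : Fintype.card V < G.edgeFinset.card)
    (v : G.Dart → ℂ) (hv : (nbMatrix G).mulVec v = v) :
    (∀ k : V, (∑ e : G.Dart, if e.toProd.2 = k then v e else 0) = 0) ∧
    (∀ d : G.Dart, v d + v d.symm = 0) := by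
  classical
  set S : V → ℂ := fun k => ∑ e : G.Dart, if e.toProd.2 = k then v e else 0 with hSdef
  have key : ∀ d : G.Dart, v d + v d.symm = S d.toProd.1 := by
    intro d
    have h := congrFun hv d
    simp only [mulVec, dotProduct, nbMatrix, ite_mul, one_mul, zero_mul] at h
    have split : ∀ e : G.Dart,
        (if e.toProd.2 = d.toProd.1 then v e else 0) =
        (if e.toProd.2 = d.toProd.1 ∧ e.toProd.1 ≠ d.toProd.2 then v e else 0) +
        (if e = d.symm then v e else 0) := by
      intro e
      by_cases he : e = d.symm
      · subst he
        simp [Dart.symm_toProd]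
      · by_cases h1 : e.toProd.2 = d.toProd.1
        · have h2 : e.toProd.1 ≠ d.toProd.2 := by
            intro h2
            apply he
            apply Dart.ext
            rw [Dart.symm_toProd]
            exact Prod.ext h2 h1
          simp [h1, h2, he]
        · simp [h1, he]
    have hS_split : S d.toProd.1 =
        (∑ e : G.Dart, if e.toProd.2 = d.toProd.1 ∧ e.toProd.1 ≠ d.toProd.2 then v e else 0)
        + v d.symm := by
      calc S d.toProd.1
          = ∑ e : G.Dart, ((if e.toProd.2 = d.toProd.1 ∧ e.toProd.1 ≠ d.toProd.2 then v e else 0)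
            + (if e = d.symm then v e else 0)) := Finset.sum_congr rfl fun e _ => split e
        _ = (∑ e : G.Dart, if e.toProd.2 = d.toProd.1 ∧ e.toProd.1 ≠ d.toProd.2 then v e else 0)
            + ∑ e : G.Dart, (if e = d.symm then v e else 0) := Finset.sum_add_distrib
        _ = _ := by rw [Finset.sum_ite_eq' Finset.univ d.symm v]; simp
    rw [hS_split, ← h]
  have adjS : ∀ {x y : V}, G.Adj x y → S x = S y := by
    intro x y hxy
    have k1 := key ⟨(x, y), hxy⟩
    have k2 := key (⟨(x, y), hxy⟩ : G.Dart).symm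
    rw [Dart.symm_symm] at k2
    calc S x = v (⟨(x, y), hxy⟩ : G.Dart) + v (⟨(x, y), hxy⟩ : G.Dart).symm := k1.symm
      _ = v (⟨(x, y), hxy⟩ : G.Dart).symm + v (⟨(x, y), hxy⟩ : G.Dart) := add_comm _ _
      _ = S y := k2
  obtain ⟨x₀⟩ := hconn.nonempty
  have hconst : ∀ x : V, S x = S x₀ := by
    intro x
    obtain ⟨w⟩ := hconn.preconnected x x₀
    induction w with
    | nil => rfl
    | cons h p ih => exact (adjS h).trans ih
  have hdartsum : (∑ k : V, S k) = ∑ d : G.Dart, v d := by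
    simp only [hSdef]
    rw [Finset.sum_comm]
    simp [Finset.sum_ite_eq]
  have hsymm_sum : (∑ d : G.Dart, v d.symm) = ∑ d : G.Dart, v d :=
    Fintype.sum_bijective Dart.symm (Dart.symm_involutive.bijective) _ _ (fun d => rfl)
  have hcount : Fintype.card G.Dart = 2 * G.edgeFinset.card :=
    G.dart_card_eq_twice_card_edges
  have h1 : (Fintype.card V : ℂ) * S x₀ = ∑ d : G.Dart, v d := by
    calc (Fintype.card V : ℂ) * S x₀ = ∑ _k : V, S x₀ := by
          rw [Finset.sum_const, Finset.card_univ, nsmul_eq_mul]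
      _ = ∑ k, S k := Finset.sum_congr rfl fun k _ => (hconst k).symm
      _ = ∑ d, v d := hdartsum
  have h2 : (2 * (G.edgeFinset.card : ℂ)) * S x₀ = 2 * ∑ d : G.Dart, v d := by
    calc (2 * (G.edgeFinset.card : ℂ)) * S x₀ = ∑ _d : G.Dart, S x₀ := by
          rw [Finset.sum_const, Finset.card_univ, hcount, nsmul_eq_mul]
          push_cast
          ring
      _ = ∑ d : G.Dart, (v d + v d.symm) :=
          Finset.sum_congr rfl fun d _ => ((key d).trans (hconst _)).symm
      _ = (∑ d : G.Dart, v d) + ∑ d : G.Dart, v d.symm := Finset.sum_add_distrib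
      _ = 2 * ∑ d : G.Dart, v d := by rw [hsymm_sum]; ring
  have hzero : S x₀ = 0 := by
    by_contra hc
    have h3 : (2 * (Fintype.card V : ℂ)) * S x₀ = (2 * (G.edgeFinset.card : ℂ)) * S x₀ := by
      rw [h2, ← h1]; ring
    have h4 := mul_right_cancel₀ hc h3
    have h5 : (Fintype.card V : ℂ) = (G.edgeFinset.card : ℂ) :=
      mul_left_cancel₀ two_ne_zero h4
    have h6 : Fintype.card V = G.edgeFinset.card := by exact_mod_cast h5
    exact hmn.ne h6
  constructor
  · intro k
    show S k = 0
    exact (hconst k).trans hzero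
  · intro d
    rw [key d]
    exact (hconst _).trans hzero
end

section
/- Let C = (w, x, y, z) be a cycle of length 4 in a graph G. The symmetric vector v with v_{w→x} = v_{x→w} = v_{y→z} = v_{z→y} = 1, v_{x→y} = v_{y→x} = v_{z→w} = v_{w→z} = −1, and 0 elsewhere satisfies Bv = −v. More generally, for any even-length cycle, the alternating symmetric cycle vector is an eigenfunction of B with eigenvalue −1. -/
open SimpleGraph Matrix

/-- The alternating symmetric vector of an even cycle `c 0, c 1, …, c (2s) = c 0`:
it assigns `(−1)^i` to both orientations of the edge `c i − c (i+1)` and 0 elsewhere. -/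
noncomputable def altCycleVec {V : Type} [Fintype V] [DecidableEq V]
    (G : SimpleGraph V) [DecidableRel G.Adj] (s : ℕ) (c : ℕ → V) : G.Dart → ℂ :=
  fun d => ∑ i ∈ Finset.range (2 * s),
    if d.toProd = (c i, c (i + 1)) ∨ d.toProd = (c (i + 1), c i) then (-1 : ℂ) ^ i else 0

private lemma shift_sum {f : ℕ → ℂ} {n : ℕ} (h : f n = f 0) :
    ∑ i ∈ Finset.range n, f (i + 1) = ∑ i ∈ Finset.range n, f i := by
  have key : (∑ i ∈ Finset.range n, f (i + 1)) + f 0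
      = (∑ i ∈ Finset.range n, f i) + f n := by
    rw [← Finset.sum_range_succ', Finset.sum_range_succ]
  rw [h] at key
  exact add_right_cancel key

private lemma dart_sum {V : Type} [Fintype V] [DecidableEq V] (G : SimpleGraph V)
    [DecidableRel G.Adj] {a b : V} (hab : G.Adj a b) (h : G.Dart → ℂ) :
    ∑ e : G.Dart, (if e.toProd = (a, b) then h e else 0) = h ⟨(a, b), hab⟩ := by
  rw [Finset.sum_eq_single (⟨(a, b), hab⟩ : G.Dart)]
  · simp
  · intro e _ hne
    rw [if_neg]
    intro hc
    exact hne (SimpleGraph.Dart.ext _ _ hc)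
  · simp

/-- For any even-length cycle (in particular a 4-cycle `(w,x,y,z)`), the alternating
symmetric cycle vector is an eigenfunction of the non-backtracking matrix with
eigenvalue −1. -/
theorem altCycleVec_eigen_neg_one {V : Type} [Fintype V] [DecidableEq V]
    (G : SimpleGraph V) [DecidableRel G.Adj] (s : ℕ) (hs : 2 ≤ s) (c : ℕ → V)
    (hper : ∀ i, c (i + 2 * s) = c i)
    (hinj : ∀ i < 2 * s, ∀ j < 2 * s, c i = c j → i = j)
    (hadj : ∀ i, G.Adj (c i) (c (i + 1))) :
    (nbMatrix G).mulVec (altCycleVec G s c) = (-1 : ℂ) • altCycleVec G s c := by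
  funext d
  have hne : ∀ i, c i ≠ c (i + 1) := fun i => (hadj i).ne
  have hsign : ((-1 : ℂ)) ^ (2 * s) = 1 := by
    rw [pow_mul]; norm_num
  -- inner dart sum computation
  have inner : ∀ i, (∑ e : G.Dart,
      (if e.toProd.2 = d.toProd.1 ∧ e.toProd.1 ≠ d.toProd.2 then (1 : ℂ) else 0) *
      (if e.toProd = (c i, c (i + 1)) ∨ e.toProd = (c (i + 1), c i) then ((-1 : ℂ)) ^ i else 0))
    = (if c (i + 1) = d.toProd.1 ∧ c i ≠ d.toProd.2 then ((-1 : ℂ)) ^ i else 0)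
      + (if c i = d.toProd.1 ∧ c (i + 1) ≠ d.toProd.2 then ((-1 : ℂ)) ^ i else 0) := by
    intro i
    have hsplit : ∀ e : G.Dart,
        (if e.toProd.2 = d.toProd.1 ∧ e.toProd.1 ≠ d.toProd.2 then (1 : ℂ) else 0) *
        (if e.toProd = (c i, c (i + 1)) ∨ e.toProd = (c (i + 1), c i) then ((-1 : ℂ)) ^ i else 0)
      = (if e.toProd = (c i, c (i + 1)) then
            (if e.toProd.2 = d.toProd.1 ∧ e.toProd.1 ≠ d.toProd.2 then ((-1 : ℂ)) ^ i else 0) else 0)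
        + (if e.toProd = (c (i + 1), c i) then
            (if e.toProd.2 = d.toProd.1 ∧ e.toProd.1 ≠ d.toProd.2 then ((-1 : ℂ)) ^ i else 0) else 0) := by
      intro e
      by_cases hA : e.toProd = (c i, c (i + 1)) <;> by_cases hB : e.toProd = (c (i + 1), c i)
      · exfalso; rw [hA] at hB; exact hne i (congrArg Prod.fst hB)
      · rw [hA]
        simp only [Prod.mk.injEq, hne i, (hadj i).ne', false_and, and_false, or_false,
          if_true, if_false, true_and, and_true, eq_self_iff_true]
        split_ifs <;> ring
      · rw [hB]
        simp only [Prod.mk.injEq, hne i, (hadj i).ne', false_and, and_false, false_or,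
          if_true, if_false, true_and, and_true, eq_self_iff_true]
        split_ifs <;> ring
      · simp [hA, hB]
    simp only [hsplit]
    rw [Finset.sum_add_distrib, dart_sum G (hadj i), dart_sum G (hadj i).symm]
  -- main computation
  simp only [Matrix.mulVec, dotProduct, nbMatrix, altCycleVec, Pi.smul_apply, smul_eq_mul,
    Finset.mul_sum]
  rw [Finset.sum_comm]
  simp only [inner]
  -- split sums
  rw [Finset.sum_add_distrib]
  -- reindex the first sum on the left
  have hL : (∑ i ∈ Finset.range (2 * s),
      (if c (i + 1) = d.toProd.1 ∧ c i ≠ d.toProd.2 then ((-1 : ℂ)) ^ i else 0))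
    = ∑ i ∈ Finset.range (2 * s),
      -(if c i = d.toProd.1 ∧ c (i + (2 * s - 1)) ≠ d.toProd.2 then ((-1 : ℂ)) ^ i else 0) := by
    have step : ∀ i, (if c (i + 1) = d.toProd.1 ∧ c i ≠ d.toProd.2 then ((-1 : ℂ)) ^ i else 0)
        = -(if c (i + 1) = d.toProd.1 ∧ c ((i + 1) + (2 * s - 1)) ≠ d.toProd.2
            then ((-1 : ℂ)) ^ (i + 1) else 0) := by
      intro i
      have he : (i + 1) + (2 * s - 1) = i + 2 * s := by omega
      rw [he, hper i, pow_succ]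
      split_ifs <;> ring
    simp only [step]
    apply shift_sum
      (f := fun j => -(if c j = d.toProd.1 ∧ c (j + (2 * s - 1)) ≠ d.toProd.2
        then ((-1 : ℂ)) ^ j else 0))
    have e1 : c (2 * s) = c 0 := by simpa using hper 0
    have e2 : c (2 * s + (2 * s - 1)) = c (2 * s - 1) := by
      rw [← hper (2 * s - 1)]; congr 1; omega
    simp [e1, e2, hsign]
  rw [hL]
  -- split the right-hand side
  have hR : ∀ i, (-1 : ℂ) *
      (if d.toProd = (c i, c (i + 1)) ∨ d.toProd = (c (i + 1), c i) then ((-1 : ℂ)) ^ i else 0)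
    = -(if d.toProd = (c i, c (i + 1)) then ((-1 : ℂ)) ^ i else 0)
      + -(if d.toProd = (c (i + 1), c i) then ((-1 : ℂ)) ^ i else 0) := by
    intro i
    by_cases hA : d.toProd = (c i, c (i + 1)) <;> by_cases hB : d.toProd = (c (i + 1), c i)
    · exfalso; rw [hA] at hB; exact hne i (congrArg Prod.fst hB)
    · simp [hA, hB, hne i, (hne i).symm]
    · simp [hA, hB, hne i, (hne i).symm]
    · simp [hA, hB]
  simp only [hR]
  rw [Finset.sum_add_distrib]
  -- reindex the second sum on the right
  have hW : (∑ i ∈ Finset.range (2 * s),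
      -(if d.toProd = (c (i + 1), c i) then ((-1 : ℂ)) ^ i else 0))
    = ∑ i ∈ Finset.range (2 * s),
      (if d.toProd = (c i, c (i + (2 * s - 1))) then ((-1 : ℂ)) ^ i else 0) := by
    have step : ∀ i, -(if d.toProd = (c (i + 1), c i) then ((-1 : ℂ)) ^ i else 0)
        = (if d.toProd = (c (i + 1), c ((i + 1) + (2 * s - 1))) then ((-1 : ℂ)) ^ (i + 1) else 0) := by
      intro i
      have he : (i + 1) + (2 * s - 1) = i + 2 * s := by omega
      rw [he, hper i, pow_succ]
      split_ifs <;> ring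
    simp only [step]
    apply shift_sum
      (f := fun j => if d.toProd = (c j, c (j + (2 * s - 1))) then ((-1 : ℂ)) ^ j else 0)
    have e1 : c (2 * s) = c 0 := by simpa using hper 0
    have e2 : c (2 * s + (2 * s - 1)) = c (2 * s - 1) := by
      rw [← hper (2 * s - 1)]; congr 1; omega
    simp [e1, e2, hsign]
  rw [hW]
  -- now prove termwise equality
  rw [← Finset.sum_add_distrib, ← Finset.sum_add_distrib]
  apply Finset.sum_congr rfl
  intro i _
  simp only [Prod.ext_iff]
  have h1' : (c i = d.toProd.1) ↔ (d.toProd.1 = c i) := eq_comm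
  have h2' : (c (i + 1) = d.toProd.2) ↔ (d.toProd.2 = c (i + 1)) := eq_comm
  have h3' : (c (i + (2 * s - 1)) = d.toProd.2) ↔ (d.toProd.2 = c (i + (2 * s - 1))) := eq_comm
  have h4' : (c (i + (2 * s - 1)) = c (i + 1)) ↔ (c (i + 1) = c (i + (2 * s - 1))) := eq_comm
  by_cases h1 : d.toProd.1 = c i <;> by_cases h2 : d.toProd.2 = c (i + 1) <;>
    by_cases h3 : d.toProd.2 = c (i + (2 * s - 1)) <;>
    by_cases h4 : c (i + 1) = c (i + (2 * s - 1)) <;>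
    simp [h1', h2', h3', h4', h1, h2, h3, h4] <;> ring
end

section
/- Let G be a graph with no nodes of degree 1, and let v be an eigenfunction of the non-backtracking matrix B with nonzero eigenvalue λ. Then the subgraph induced by the support of v has no nodes of degree 1. -/
open SimpleGraph Matrix

/-- If G has minimum degree ≥ 2 and v is an eigenfunction of B with nonzero eigenvalue,
then the subgraph induced by the support of v has no nodes of degree 1: for every node x,
the number of neighbors of x in the support subgraph is not 1. -/
theorem support_no_degree_one {V : Type} [Fintype V] [DecidableEq V]
    (G : SimpleGraph V) [DecidableRel G.Adj]
    (hmin : ∀ x : V, 2 ≤ G.degree x)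
    (v : G.Dart → ℂ) (lam : ℂ) (hlam : lam ≠ 0) (hv0 : v ≠ 0)
    (hv : (nbMatrix G).mulVec v = lam • v) (x : V) :
    {y : V | ∃ d : G.Dart, d.toProd = (x, y) ∧ (v d ≠ 0 ∨ v d.symm ≠ 0)}.ncard ≠ 1 := by
  intro hcard
  set S := {y : V | ∃ d : G.Dart, d.toProd = (x, y) ∧ (v d ≠ 0 ∨ v d.symm ≠ 0)} with hSdef
  obtain ⟨y, hSy⟩ := Set.ncard_eq_one.mp hcard
  have hyS : y ∈ S := by rw [hSy]; exact rfl
  obtain ⟨d0, hd0, hd0v⟩ := hyS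
  have hadj : G.Adj x y := by
    have := d0.adj
    rw [hd0] at this
    exact this
  -- vanishing of darts entering x from vertices ≠ y
  have hvan : ∀ e : G.Dart, e.toProd.2 = x → e.toProd.1 ≠ y → v e = 0 := by
    intro e he2 he1
    by_contra hne
    have hmem : e.toProd.1 ∈ S := by
      refine ⟨e.symm, ?_, Or.inr (by rwa [Dart.symm_symm])⟩
      rw [Dart.symm_toProd, Prod.swap]
      exact Prod.ext he2 rfl
    rw [hSy] at hmem
    exact he1 hmem
  -- second neighbor z of x
  obtain ⟨z, hz, hzy⟩ := Finset.exists_mem_ne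
    (lt_of_lt_of_le one_lt_two (hmin x)) y
  have hadjz : G.Adj x z := by rwa [SimpleGraph.mem_neighborFinset] at hz
  set dxy : G.Dart := ⟨(x, y), hadj⟩ with hdxy
  set dyx : G.Dart := ⟨(y, x), hadj.symm⟩ with hdyx
  set dxz : G.Dart := ⟨(x, z), hadjz⟩ with hdxz
  have hzS : z ∉ S := by rw [hSy]; simpa using hzy
  have hdxz0 : v dxz = 0 := by
    by_contra h
    exact hzS ⟨dxz, rfl, Or.inl h⟩
  -- eigen equation at dxz gives v dyx = 0
  have heq1 := congrFun hv dxz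
  simp only [Matrix.mulVec, dotProduct, nbMatrix, Pi.smul_apply, smul_eq_mul] at heq1
  have hsum1 : ∑ e : G.Dart,
      (if e.toProd.2 = dxz.toProd.1 ∧ e.toProd.1 ≠ dxz.toProd.2 then (1:ℂ) else 0) * v e
      = v dyx := by
    rw [Finset.sum_eq_single dyx]
    · have : dyx.toProd.2 = dxz.toProd.1 ∧ dyx.toProd.1 ≠ dxz.toProd.2 :=
        ⟨rfl, hzy.symm⟩
      rw [if_pos this, one_mul]
    · intro e _ hne
      by_cases hP : e.toProd.2 = dxz.toProd.1 ∧ e.toProd.1 ≠ dxz.toProd.2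
      · have h1 : e.toProd.1 ≠ y := by
          intro h
          apply hne
          apply Dart.ext
          exact Prod.ext h hP.1
        rw [hvan e hP.1 h1, mul_zero]
      · rw [if_neg hP, zero_mul]
    · intro h; exact absurd (Finset.mem_univ _) h
  rw [hsum1, hdxz0, mul_zero] at heq1
  have hdyx0 : v dyx = 0 := heq1
  -- eigen equation at dxy gives v dxy = 0
  have heq2 := congrFun hv dxy
  simp only [Matrix.mulVec, dotProduct, nbMatrix, Pi.smul_apply, smul_eq_mul] at heq2
  have hsum2 : ∑ e : G.Dart,
      (if e.toProd.2 = dxy.toProd.1 ∧ e.toProd.1 ≠ dxy.toProd.2 then (1:ℂ) else 0) * v e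
      = 0 := by
    apply Finset.sum_eq_zero
    intro e _
    by_cases hP : e.toProd.2 = dxy.toProd.1 ∧ e.toProd.1 ≠ dxy.toProd.2
    · rw [hvan e hP.1 hP.2, mul_zero]
    · rw [if_neg hP, zero_mul]
  rw [hsum2] at heq2
  have hdxy0 : v dxy = 0 := by
    rcases mul_eq_zero.mp heq2.symm with h | h
    · exact absurd h hlam
    · exact h
  -- contradiction with y ∈ S
  have hd0e : d0 = dxy := Dart.ext _ _ hd0
  have hsymm : d0.symm = dyx := by
    apply Dart.ext
    rw [Dart.symm_toProd, hd0]
    rfl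
  rcases hd0v with h | h
  · rw [hd0e] at h; exact h hdxy0
  · rw [hsymm] at h; exact h hdyx0
end

section
/- (Key Lemma) Let Bv = λv with |λ| = 1, and let k = i_0, i_1, …, i_p = l be a non-backtracking chain of length p in G, meaning deg(k) > 2, deg(l) > 2, and deg(i_j) = 2 for 0 < j < p. If v is nonzero on at least one of the oriented edges i_j → i_{j+1}, then v is nonzero on all of them, and λ^{2p} = 1. -/
open SimpleGraph Matrix Finset Complex

variable {V : Type} [Fintype V] [DecidableEq V] (G : SimpleGraph V) [DecidableRel G.Adj]

lemma nb_mulVec_apply (v : G.Dart → ℂ) (d : G.Dart) :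
    (nbMatrix G).mulVec v d
      = (∑ e ∈ univ.filter (fun e : G.Dart => e.toProd.2 = d.toProd.1), v e) - v d.symm := by
  classical
  unfold nbMatrix Matrix.mulVec dotProduct
  rw [Finset.sum_filter]
  have hsymm : v d.symm = ∑ e : G.Dart, if e = d.symm then v e else 0 := by
    rw [Finset.sum_ite_eq' Finset.univ d.symm v]; simp
  rw [hsymm, ← Finset.sum_sub_distrib]
  refine Finset.sum_congr rfl fun e _ => ?_
  by_cases h1 : e = d.symm
  · subst h1
    simp [Dart.symm]
  · by_cases h2 : e.toProd.2 = d.toProd.1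
    · have h3 : e.toProd.1 ≠ d.toProd.2 := by
        intro hc
        exact h1 (Dart.ext _ _ (by simp [Dart.symm, Prod.ext_iff, hc, h2]))
      simp [h1, h2, h3]
    · simp [h1, h2]

lemma dart_snd_fiber_card (u : V) :
    (univ.filter (fun d : G.Dart => d.toProd.2 = u)).card = G.degree u := by
  rw [← dart_fst_fiber_card_eq_degree G u]
  apply Finset.card_bij' (fun d _ => d.symm) (fun d _ => d.symm)
  · intro a _; exact Dart.symm_symm a
  · intro a _; exact Dart.symm_symm a
  · intro a ha; simp only [mem_filter, mem_univ, true_and] at ha ⊢; exact ha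
  · intro a ha; simp only [mem_filter, mem_univ, true_and] at ha ⊢; exact ha

lemma S_eq_zero (hmin : ∀ x : V, 2 ≤ G.degree x)
    (v : G.Dart → ℂ) (lam : ℂ) (hlam : ‖lam‖ = 1)
    (hv : (nbMatrix G).mulVec v = lam • v)
    (u : V) (hu : 2 < G.degree u) :
    ∑ e ∈ univ.filter (fun e : G.Dart => e.toProd.2 = u), v e = 0 := by
  classical
  set S : V → ℂ := fun w => ∑ e ∈ univ.filter (fun e : G.Dart => e.toProd.2 = w), v e with hS
  have hlam2 : normSq lam = 1 := by
    rw [normSq_eq_norm_sq, hlam]; norm_num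
  have h1 : ∀ d : G.Dart, S d.toProd.1 - v d.symm = lam * v d := by
    intro d
    have := congrFun hv d
    rw [nb_mulVec_apply] at this
    simpa using this
  -- key norm identity
  have h2 : ∑ d : G.Dart, normSq (S d.toProd.2 - v d) = ∑ d : G.Dart, normSq (v d) := by
    have hb := Dart.symm_involutive (G := G) |>.bijective
    calc ∑ d : G.Dart, normSq (S d.toProd.2 - v d)
        = ∑ d : G.Dart, normSq (S d.toProd.1 - v d.symm) := by
          refine Fintype.sum_bijective Dart.symm hb _ _ fun d => ?_
          simp [Dart.symm]
      _ = ∑ d : G.Dart, normSq (lam * v d) := by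
          refine Finset.sum_congr rfl fun d _ => by rw [h1]
      _ = ∑ d : G.Dart, normSq (v d) := by
          refine Finset.sum_congr rfl fun d _ => by rw [normSq_mul, hlam2, one_mul]
  have h3 : ∑ d : G.Dart, (normSq (S d.toProd.2)
      - 2 * (S d.toProd.2 * (starRingEnd ℂ) (v d)).re) = 0 := by
    have : ∀ d : G.Dart, normSq (S d.toProd.2 - v d)
        = (normSq (S d.toProd.2) - 2 * (S d.toProd.2 * (starRingEnd ℂ) (v d)).re)
          + normSq (v d) := by
      intro d; rw [normSq_sub]; ring
    rw [Finset.sum_congr rfl (fun d _ => this d), Finset.sum_add_distrib] at h2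
    linarith [h2]
  have hA : ∑ d : G.Dart, normSq (S d.toProd.2) = ∑ w : V, (G.degree w : ℝ) * normSq (S w) := by
    rw [← Finset.sum_fiberwise univ (fun d : G.Dart => d.toProd.2) (fun d => normSq (S d.toProd.2))]
    refine Finset.sum_congr rfl fun w _ => ?_
    have : ∀ d ∈ univ.filter (fun d : G.Dart => d.toProd.2 = w),
        normSq (S d.toProd.2) = normSq (S w) := by
      intro d hd; rw [(mem_filter.1 hd).2]
    rw [Finset.sum_congr rfl this, Finset.sum_const, dart_snd_fiber_card, nsmul_eq_mul]
  have hB : ∑ d : G.Dart, (S d.toProd.2 * (starRingEnd ℂ) (v d)).re = ∑ w : V, normSq (S w) := by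
    rw [← Finset.sum_fiberwise univ (fun d : G.Dart => d.toProd.2)
      (fun d => (S d.toProd.2 * (starRingEnd ℂ) (v d)).re)]
    refine Finset.sum_congr rfl fun w _ => ?_
    have : ∀ d ∈ univ.filter (fun d : G.Dart => d.toProd.2 = w),
        (S d.toProd.2 * (starRingEnd ℂ) (v d)).re = (S w * (starRingEnd ℂ) (v d)).re := by
      intro d hd; rw [(mem_filter.1 hd).2]
    rw [Finset.sum_congr rfl this, ← Complex.re_sum, ← Finset.mul_sum, ← map_sum]
    have hSw : (∑ x ∈ univ.filter (fun d : G.Dart => d.toProd.2 = w), v x) = S w := rfl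
    rw [hSw, Complex.mul_conj, Complex.ofReal_re]
  have h4 : ∑ w : V, ((G.degree w : ℝ) - 2) * normSq (S w) = 0 := by
    have : ∑ w : V, ((G.degree w : ℝ) - 2) * normSq (S w)
        = ∑ w : V, (G.degree w : ℝ) * normSq (S w) - 2 * ∑ w : V, normSq (S w) := by
      rw [Finset.mul_sum, ← Finset.sum_sub_distrib]
      exact Finset.sum_congr rfl fun w _ => by ring
    rw [this, ← hA, ← hB]
    rw [Finset.sum_sub_distrib, ← Finset.mul_sum] at h3
    linarith [h3]
  have h5 := (Finset.sum_eq_zero_iff_of_nonneg (fun w _ => ?_)).1 h4 u (mem_univ u)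
  · have hne : ((G.degree u : ℝ) - 2) ≠ 0 := by
      have : (2 : ℝ) < (G.degree u : ℝ) := by exact_mod_cast hu
      linarith
    have := mul_eq_zero.1 h5
    rcases this with h | h
    · exact absurd h hne
    · exact normSq_eq_zero.1 h
  · have : (2 : ℝ) ≤ (G.degree w : ℝ) := by exact_mod_cast hmin w
    exact mul_nonneg (by linarith) (normSq_nonneg _)

lemma fiber_pair {u a b : V} (hab : a ≠ b) (ha : G.Adj a u) (hb : G.Adj b u)
    (hdeg : G.degree u = 2) :
    univ.filter (fun d : G.Dart => d.toProd.2 = u)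
      = {(⟨(a, u), ha⟩ : G.Dart), ⟨(b, u), hb⟩} := by
  have hnf : G.neighborFinset u = {a, b} := by
    refine (Finset.eq_of_subset_of_card_le ?_ ?_).symm
    · intro x hx
      rw [G.mem_neighborFinset]
      rcases Finset.mem_insert.1 hx with rfl | hx
      · exact ha.symm
      · rw [Finset.mem_singleton] at hx; subst hx; exact hb.symm
    · rw [card_neighborFinset_eq_degree, hdeg, Finset.card_insert_of_notMem (by simpa using hab),
        Finset.card_singleton]
  ext d
  simp only [mem_filter, mem_univ, true_and, mem_insert, mem_singleton]
  constructor
  · intro hd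
    have hd1 : d.toProd.1 ∈ G.neighborFinset u := by
      exact (G.mem_neighborFinset u d.toProd.1).2 (hd ▸ d.adj).symm
    rw [hnf] at hd1
    rcases Finset.mem_insert.1 hd1 with h | h
    · left; exact Dart.ext _ _ (Prod.ext h hd)
    · right; exact Dart.ext _ _ (Prod.ext (Finset.mem_singleton.1 h) hd)
  · rintro (rfl | rfl) <;> rfl

lemma S_pair (v : G.Dart → ℂ) {u a b : V} (hab : a ≠ b) (ha : G.Adj a u) (hb : G.Adj b u)
    (hdeg : G.degree u = 2) :
    ∑ e ∈ univ.filter (fun e : G.Dart => e.toProd.2 = u), v e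
      = v ⟨(a, u), ha⟩ + v ⟨(b, u), hb⟩ := by
  rw [fiber_pair G hab ha hb hdeg]
  refine Finset.sum_pair ?_
  intro h
  exact hab (congrArg (fun d : G.Dart => d.toProd.1) h)

/-- **Key Lemma.** Let Bv = λv with |λ| = 1, and let `c 0, …, c p` be a non-backtracking
chain: endpoints of degree > 2, interior nodes of degree exactly 2. If v is nonzero on at
least one of the oriented edges `c j → c (j+1)` of the chain, then it is nonzero on all of
them, and `λ^(2p) = 1`. -/
theorem key_lemma {V : Type} [Fintype V] [DecidableEq V]
    (G : SimpleGraph V) [DecidableRel G.Adj] (hmin : ∀ x : V, 2 ≤ G.degree x)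
    (v : G.Dart → ℂ) (lam : ℂ) (hlam : ‖lam‖ = 1)
    (hv : (nbMatrix G).mulVec v = lam • v)
    (p : ℕ) (hp : 0 < p) (c : ℕ → V)
    (hadj : ∀ j, j < p → G.Adj (c j) (c (j + 1)))
    (hnb : ∀ j, j + 2 ≤ p → c (j + 2) ≠ c j)
    (hk : 2 < G.degree (c 0)) (hl : 2 < G.degree (c p))
    (hmid : ∀ j, 0 < j → j < p → G.degree (c j) = 2)
    (hne : ∃ j, ∃ h : j < p, v ⟨(c j, c (j + 1)), hadj j h⟩ ≠ 0) :
    (∀ j, ∀ h : j < p, v ⟨(c j, c (j + 1)), hadj j h⟩ ≠ 0) ∧ lam ^ (2 * p) = 1 := by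
  classical
  obtain ⟨q, rfl⟩ : ∃ q, p = q + 1 := ⟨p - 1, (Nat.succ_pred_eq_of_pos hp).symm⟩
  have heig : ∀ d : G.Dart,
      (∑ e ∈ univ.filter (fun e : G.Dart => e.toProd.2 = d.toProd.1), v e) - v d.symm
        = lam * v d := by
    intro d
    have h := congrFun hv d
    rw [nb_mulVec_apply] at h
    simpa using h
  have hSzero := S_eq_zero G hmin v lam hlam hv
  have hlamne : lam ≠ 0 := by
    intro h; rw [h] at hlam; simp at hlam
  set E : ℕ → ℂ := fun j => if h : j < q + 1 then v ⟨(c j, c (j + 1)), hadj j h⟩ else 0 with hE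
  set F : ℕ → ℂ := fun j =>
    if h : j < q + 1 then v ⟨(c (j + 1), c j), (hadj j h).symm⟩ else 0 with hF
  have hEdef : ∀ j (h : j < q + 1), E j = v ⟨(c j, c (j + 1)), hadj j h⟩ := fun j h => dif_pos h
  have hFdef : ∀ j (h : j < q + 1), F j = v ⟨(c (j + 1), c j), (hadj j h).symm⟩ :=
    fun j h => dif_pos h
  -- recurrences at interior nodes
  have rE : ∀ j, j + 1 < q + 1 → E j = lam * E (j + 1) := by
    intro j hj
    have hjq : j < q + 1 := by omega
    have hd := heig ⟨(c (j + 1), c (j + 2)), hadj (j + 1) hj⟩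
    simp only [Dart.symm_mk, Prod.swap_prod_mk] at hd
    rw [S_pair G v (hnb j hj).symm (hadj j hjq) (hadj (j + 1) hj).symm
      (hmid (j + 1) (Nat.succ_pos j) hj)] at hd
    rw [add_sub_cancel_right] at hd
    rw [hEdef j hjq, hEdef (j + 1) hj]
    exact hd
  have rF : ∀ j, j + 1 < q + 1 → F (j + 1) = lam * F j := by
    intro j hj
    have hjq : j < q + 1 := by omega
    have hd := heig ⟨(c (j + 1), c j), (hadj j hjq).symm⟩
    simp only [Dart.symm_mk, Prod.swap_prod_mk] at hd
    rw [S_pair G v (hnb j hj).symm (hadj j hjq) (hadj (j + 1) hj).symm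
      (hmid (j + 1) (Nat.succ_pos j) hj)] at hd
    rw [add_sub_cancel_left] at hd
    rw [hFdef (j + 1) hj, hFdef j hjq]
    exact hd
  have r0 : F 0 = -(lam * E 0) := by
    have h0 : (0 : ℕ) < q + 1 := Nat.succ_pos q
    have hd := heig ⟨(c 0, c 1), hadj 0 h0⟩
    simp only [Dart.symm_mk, Prod.swap_prod_mk] at hd
    rw [hSzero (c 0) hk, zero_sub] at hd
    rw [hFdef 0 h0, hEdef 0 h0]
    linear_combination -hd
  have rq : E q = -(lam * F q) := by
    have hq : q < q + 1 := Nat.lt_succ_self q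
    have hd := heig ⟨(c (q + 1), c q), (hadj q hq).symm⟩
    simp only [Dart.symm_mk, Prod.swap_prod_mk] at hd
    rw [hSzero (c (q + 1)) hl, zero_sub] at hd
    rw [hEdef q hq, hFdef q hq]
    linear_combination -hd
  have hEform : ∀ i, i ≤ q → E (q - i) = lam ^ i * E q := by
    intro i
    induction i with
    | zero => intro _; simp
    | succ n ih =>
      intro hn
      have h1 : q - (n + 1) + 1 = q - n := by omega
      have h2 : q - (n + 1) + 1 < q + 1 := by omega
      have h3 := rE (q - (n + 1)) h2
      rw [h1] at h3
      rw [h3, ih (by omega), pow_succ]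
      ring
  have hEj : ∀ j, j < q + 1 → E j = lam ^ (q - j) * E q := by
    intro j hj
    have := hEform (q - j) (Nat.sub_le q j)
    rwa [Nat.sub_sub_self (by omega : j ≤ q)] at this
  have hFform : ∀ i, i ≤ q → F i = lam ^ i * F 0 := by
    intro i
    induction i with
    | zero => intro _; simp
    | succ n ih =>
      intro hn
      rw [rF n (by omega), ih (by omega), pow_succ]
      ring
  have hEqne : E q ≠ 0 := by
    obtain ⟨j, hj, hvne⟩ := hne
    have hEjne : E j ≠ 0 := by rw [hEdef j hj]; exact hvne
    rw [hEj j hj] at hEjne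
    exact right_ne_zero_of_mul hEjne
  have hF0 : F 0 = -(lam ^ (q + 1) * E q) := by
    rw [r0, hEj 0 (Nat.succ_pos q), Nat.sub_zero, pow_succ]
    ring
  have hEqeq : (1 : ℂ) * E q = lam ^ (2 * (q + 1)) * E q := by
    conv_lhs => rw [one_mul, rq, hFform q le_rfl, hF0]
    ring
  have hpow : lam ^ (2 * (q + 1)) = 1 := (mul_right_cancel₀ hEqne hEqeq.symm)
  refine ⟨fun j h => ?_, hpow⟩
  rw [← hEdef j h, hEj j h]
  exact mul_ne_zero (pow_ne_zero _ hlamne) hEqne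
end

section
/- If λ is an eigenvalue of the non-backtracking matrix of a finite graph and |λ| = 1, then λ is a root of unity. -/
open SimpleGraph Matrix

section Helpers
set_option linter.unusedSectionVars false
set_option linter.unusedVariables false

/-- Closed form for solutions of `λ(g n + g (n+2)) = (1+λ²) g (n+1)`. -/
lemma nb_closedForm (lam : ℂ) (g : ℕ → ℂ) (R : ℕ)
    (hrec : ∀ n, n + 1 ≤ R → lam * (g n + g (n + 2)) = (1 + lam ^ 2) * g (n + 1)) :
    ∀ n, n ≤ R + 1 → (lam ^ 2 - 1) * g n * lam ^ n
      = lam ^ (2 * n) * (lam * g 1 - g 0) - lam * (g 1 - lam * g 0) := by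
  intro n
  induction n using Nat.strong_induction_on with
  | _ n ih =>
    match n with
    | 0 => intro _; simp; ring
    | 1 => intro _; ring_nf
    | (m + 2) =>
      intro h
      have h1 := ih m (by omega) (by omega)
      have h2 := ih (m + 1) (by omega) (by omega)
      have hr := hrec m (by omega)
      have e1 : 2 * (m + 2) = 2 * (m + 1) + 2 := by ring
      have e2 : 2 * (m + 1) = 2 * m + 2 := by ring
      rw [e1]
      rw [e2] at h2 ⊢
      linear_combination ((lam ^ 2 - 1) * lam ^ (m + 1)) * hr + (1 + lam ^ 2) * h2
        - lam ^ 2 * h1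

lemma nb_dirichlet (lam : ℂ) (hl : lam ≠ 0) (h2 : lam ^ 2 ≠ 1) (g : ℕ → ℂ) (R : ℕ)
    (hrec : ∀ n, n + 1 ≤ R → lam * (g n + g (n + 2)) = (1 + lam ^ 2) * g (n + 1))
    (h0 : g 0 = 0) (hR1 : g (R + 1) = 0) (m : ℕ) (hm : m ≤ R + 1) (hgm : g m ≠ 0) :
    lam ^ (2 * (R + 1)) = 1 := by
  have cf := nb_closedForm lam g R hrec
  have hC : lam * (g 1 - lam * g 0) = lam * g 1 - g 0 := by rw [h0]; ring
  have cfm := cf m hm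
  rw [hC] at cfm
  have hCne : lam * g 1 - g 0 ≠ 0 := by
    intro hC0
    rw [hC0] at cfm
    have : (lam ^ 2 - 1) * g m * lam ^ m = 0 := by linear_combination cfm
    rcases mul_eq_zero.mp this with h | h
    · rcases mul_eq_zero.mp h with h | h
      · exact h2 (by linear_combination h)
      · exact hgm h
    · exact hl (pow_eq_zero_iff'.mp h).1
  have cfR := cf (R + 1) (le_refl _)
  rw [hC, hR1] at cfR
  have : (lam ^ (2 * (R + 1)) - 1) * (lam * g 1 - g 0) = 0 := by linear_combination -cfR
  rcases mul_eq_zero.mp this with h | h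
  · linear_combination h
  · exact absurd h hCne

lemma nb_periodic (lam : ℂ) (hl : lam ≠ 0) (h2 : lam ^ 2 ≠ 1) (g : ℕ → ℂ)
    (hrec : ∀ n, lam * (g n + g (n + 2)) = (1 + lam ^ 2) * g (n + 1))
    (i P : ℕ) (hP : 0 < P) (hper : ∀ n, i ≤ n → g (n + P) = g n) (hg0 : g 0 ≠ 0) :
    lam ^ P = 1 := by
  by_contra hne
  have cf : ∀ n, (lam ^ 2 - 1) * g n * lam ^ n
      = lam ^ (2 * n) * (lam * g 1 - g 0) - lam * (g 1 - lam * g 0) := fun n =>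
    nb_closedForm lam g n (fun k _ => hrec k) n (by omega)
  have E : ∀ n, i ≤ n → (lam ^ P - 1) *
      (lam ^ (2 * n + P) * (lam * g 1 - g 0) + lam * (g 1 - lam * g 0)) = 0 := by
    intro n hn
    have c1 := cf (n + P)
    have c2 := cf n
    rw [hper n hn] at c1
    have e1 : (2 * (n + P)) = 2 * n + P + P := by ring
    have e2 : lam ^ (n + P) = lam ^ n * lam ^ P := by rw [pow_add]
    have e3 : lam ^ (2 * n + P + P) = lam ^ (2 * n + P) * lam ^ P := by rw [pow_add]
    rw [e1, e2, e3] at c1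
    linear_combination lam ^ P * c2 - c1
  have Ei := E i (le_refl i)
  have Ei1 := E (i + 1) (by omega)
  have hPne : lam ^ P - 1 ≠ 0 := fun h => hne (by linear_combination h)
  have Ki := (mul_eq_zero.mp Ei).resolve_left hPne
  have Ki1 := (mul_eq_zero.mp Ei1).resolve_left hPne
  have e4 : 2 * (i + 1) + P = (2 * i + P) + 2 := by ring
  rw [e4, pow_add] at Ki1
  have hT1 : lam * g 1 - g 0 = 0 := by
    have h5 : lam ^ (2 * i + P) * ((lam ^ 2 - 1) * (lam * g 1 - g 0)) = 0 := by
      linear_combination Ki1 - Ki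
    rcases mul_eq_zero.mp h5 with h | h
    · exact absurd h (pow_ne_zero _ hl)
    · rcases mul_eq_zero.mp h with h | h
      · exact absurd (by linear_combination h) h2
      · exact h
  have hT0 : lam * (g 1 - lam * g 0) = 0 := by
    rw [hT1] at Ki
    linear_combination Ki
  have c0 := cf 0
  rw [hT1, hT0] at c0
  have : (lam ^ 2 - 1) * g 0 = 0 := by linear_combination c0
  rcases mul_eq_zero.mp this with h | h
  · exact h2 (by linear_combination h)
  · exact hg0 h


variable {V : Type} [Fintype V] [DecidableEq V] (G : SimpleGraph V) [DecidableRel G.Adj]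

lemma sum_darts_to (F : V → ℂ) (x : V) :
    ∑ e : G.Dart, (if e.snd = x then F e.fst else 0) = ∑ y ∈ G.neighborFinset x, F y := by
  rw [← Finset.sum_filter]
  refine Finset.sum_bij' (fun e _ => e.fst)
    (fun y hy => (⟨(y, x), by simpa using (G.mem_neighborFinset x y).mp hy |>.symm⟩ : G.Dart))
    ?_ ?_ ?_ ?_ ?_
  · intro e he
    have hx : e.snd = x := by simpa using he
    rw [mem_neighborFinset]
    exact (hx ▸ e.adj).symm
  · intro y hy
    simp
  · intro e he
    have hx : e.snd = x := by simpa using he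
    exact SimpleGraph.Dart.ext _ _ (by simp [hx.symm])
  · intro y hy; rfl
  · intro e he; rfl

lemma sum_over_darts (H : V → V → ℂ) :
    ∑ d : G.Dart, H d.fst d.snd = ∑ x : V, ∑ y ∈ G.neighborFinset x, H y x := by
  have step1 : ∀ d : G.Dart, H d.fst d.snd = ∑ x : V, if d.snd = x then H d.fst x else 0 := by
    intro d
    rw [Finset.sum_ite_eq]
    simp
  calc ∑ d : G.Dart, H d.fst d.snd
      = ∑ d : G.Dart, ∑ x : V, (if d.snd = x then H d.fst x else 0) :=
        Finset.sum_congr rfl (fun d _ => step1 d)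
    _ = ∑ x : V, ∑ d : G.Dart, (if d.snd = x then H d.fst x else 0) := Finset.sum_comm
    _ = ∑ x : V, ∑ y ∈ G.neighborFinset x, H y x :=
        Finset.sum_congr rfl (fun x _ => sum_darts_to G (fun y => H y x) x)

lemma sum_over_darts_symm (H : V → V → ℂ) :
    ∑ d : G.Dart, H d.fst d.snd = ∑ d : G.Dart, H d.snd d.fst := by
  exact Fintype.sum_bijective SimpleGraph.Dart.symm (Function.Involutive.bijective (SimpleGraph.Dart.symm_involutive)) _ _
    (fun d => by simp)

/-- The neighbor of `x` other than `y`, when `x` has degree 2. -/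
noncomputable def gOther (x y : V) : V :=
  if h : ((G.neighborFinset x).erase y).Nonempty then h.choose else y

lemma gOther_spec {x y : V} (hdeg : G.degree x = 2) (hadj : G.Adj x y) :
    G.Adj x (gOther G x y) ∧ gOther G x y ≠ y ∧
      G.neighborFinset x = {y, gOther G x y} := by
  have hy : y ∈ G.neighborFinset x := (G.mem_neighborFinset x y).mpr hadj
  have hcard : ((G.neighborFinset x).erase y).card = 1 := by
    rw [Finset.card_erase_of_mem hy]
    rw [G.card_neighborFinset_eq_degree, hdeg]
  have hne : ((G.neighborFinset x).erase y).Nonempty := by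
    rw [← Finset.card_pos, hcard]; omega
  have hdef : gOther G x y = hne.choose := by
    rw [gOther, dif_pos hne]
  have hmem : gOther G x y ∈ (G.neighborFinset x).erase y := hdef ▸ hne.choose_spec
  obtain ⟨a, ha⟩ := Finset.card_eq_one.mp hcard
  have hsing : (G.neighborFinset x).erase y = {gOther G x y} := by
    rw [ha] at hmem ⊢
    simp at hmem
    rw [hmem]
  refine ⟨?_, ?_, ?_⟩
  · exact (G.mem_neighborFinset x _).mp (Finset.mem_of_mem_erase hmem)
  · exact Finset.ne_of_mem_erase hmem
  · rw [← Finset.insert_erase hy, hsing]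

/-- The canonical non-backtracking walk through degree-2 vertices. -/
noncomputable def gWalk (x y : V) : ℕ → V
  | 0 => x
  | 1 => y
  | (n + 2) => gOther G (gWalk x y (n + 1)) (gWalk x y n)

lemma gWalk_adj (f : V → ℂ) (hsupp : ∀ z, f z ≠ 0 → G.degree z = 2)
    {x y : V} (hadj : G.Adj x y) :
    ∀ n, (∀ k, 1 ≤ k → k ≤ n → f (gWalk G x y k) ≠ 0) →
      G.Adj (gWalk G x y n) (gWalk G x y (n + 1)) := by
  intro n
  induction n with
  | zero => intro _; simpa [gWalk] using hadj
  | succ n ih =>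
    intro hgood
    have h1 : G.Adj (gWalk G x y n) (gWalk G x y (n + 1)) :=
      ih (fun k hk1 hk2 => hgood k hk1 (by omega))
    have hdeg : G.degree (gWalk G x y (n + 1)) = 2 :=
      hsupp _ (hgood (n + 1) (by omega) (by omega))
    have hspec := gOther_spec G hdeg h1.symm
    have : gWalk G x y (n + 2) = gOther G (gWalk G x y (n + 1)) (gWalk G x y n) := rfl
    rw [this]
    exact hspec.1

lemma gWalk_rec (lam : ℂ) (f : V → ℂ) (hsupp : ∀ z, f z ≠ 0 → G.degree z = 2)
    (hveq : ∀ z, lam * ∑ u ∈ G.neighborFinset z, f u = (1 + lam ^ 2) * f z)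
    {x y : V} (hadj : G.Adj x y) :
    ∀ n, (∀ k, 1 ≤ k → k ≤ n + 1 → f (gWalk G x y k) ≠ 0) →
      lam * (f (gWalk G x y n) + f (gWalk G x y (n + 2)))
        = (1 + lam ^ 2) * f (gWalk G x y (n + 1)) := by
  intro n hgood
  have h1 : G.Adj (gWalk G x y n) (gWalk G x y (n + 1)) :=
    gWalk_adj G f hsupp hadj n (fun k hk1 hk2 => hgood k hk1 (by omega))
  have hdeg : G.degree (gWalk G x y (n + 1)) = 2 :=
    hsupp _ (hgood (n + 1) (by omega) (by omega))
  have hspec := gOther_spec G hdeg h1.symm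
  have hw2 : gWalk G x y (n + 2) = gOther G (gWalk G x y (n + 1)) (gWalk G x y n) := rfl
  have hv := hveq (gWalk G x y (n + 1))
  rw [hspec.2.2, Finset.sum_pair (Ne.symm hspec.2.1)] at hv
  rw [hw2]
  rw [hv]

lemma gWalk_per {x y : V} (i P : ℕ)
    (hij : gWalk G x y (i + P) = gWalk G x y i)
    (hij1 : gWalk G x y (i + P + 1) = gWalk G x y (i + 1)) :
    ∀ m, gWalk G x y (i + m + P) = gWalk G x y (i + m) := by
  intro m
  induction m using Nat.strong_induction_on with
  | _ m ih =>
    match m with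
    | 0 => simpa using hij
    | 1 => have : i + 1 + P = i + P + 1 := by omega
           rw [this]; exact hij1
    | (m + 2) =>
      have e1 : i + (m + 2) + P = (i + m + P) + 2 := by omega
      have e2 : i + (m + 2) = (i + m) + 2 := by omega
      have e3 : (i + m + P) + 1 = i + (m + 1) + P := by omega
      rw [e1, e2]
      show gOther G (gWalk G x y ((i + m + P) + 1)) (gWalk G x y (i + m + P))
        = gOther G (gWalk G x y ((i + m) + 1)) (gWalk G x y (i + m))
      rw [e3, ih (m + 1) (by omega), ih m (by omega)]
      have e4 : i + (m + 1) = i + m + 1 := by omega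
      rw [e4]

end Helpers

set_option maxHeartbeats 1000000 in
/-- Any unitary eigenvalue of the non-backtracking matrix of a finite (connected, minimum
degree ≥ 2) graph is a root of unity. -/
theorem unitary_eigenvalue_is_root_of_unity {V : Type} [Fintype V] [DecidableEq V]
    (G : SimpleGraph V) [DecidableRel G.Adj]
    (hconn : G.Connected) (hmin : ∀ x : V, 2 ≤ G.degree x)
    (lam : ℂ) (hlam : ‖lam‖ = 1)
    (hev : ∃ v : G.Dart → ℂ, v ≠ 0 ∧ (nbMatrix G).mulVec v = lam • v) :
    ∃ q : ℕ, 0 < q ∧ lam ^ q = 1 := by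
  classical
  obtain ⟨v, hv0, hBv⟩ := hev
  by_cases hsq : lam ^ 2 = 1
  · exact ⟨2, by norm_num, hsq⟩
  have hl0 : lam ≠ 0 := by
    intro h; rw [h] at hlam; simp at hlam
  have hnorm : lam.re ^ 2 + lam.im ^ 2 = 1 := by
    have h1 : Complex.normSq lam = 1 := by
      rw [← Complex.sq_norm, hlam]; norm_num
    rw [Complex.normSq_apply] at h1
    nlinarith [h1]
  have him : lam.im ≠ 0 := by
    intro h
    apply hsq
    have h1 : lam = (lam.re : ℂ) := Complex.ext rfl (by simp [h])
    have h2 : lam.re ^ 2 = 1 := by nlinarith [hnorm]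
    rw [h1, ← Complex.ofReal_pow, h2]
    norm_num
  -- the vertex function
  set f : V → ℂ := fun x => ∑ e : G.Dart, (if e.toProd.2 = x then v e else 0) with hfdef
  have hfx : ∀ x, f x = ∑ e : G.Dart, (if e.toProd.2 = x then v e else 0) := fun x => rfl
  -- dart equation
  have hde : ∀ d : G.Dart, lam * v d = f d.toProd.1 - v d.symm := by
    intro d
    have h1 : ∑ e : G.Dart, nbMatrix G d e * v e = lam * v d := by
      have h0 := congrFun hBv d
      rw [Matrix.mulVec, dotProduct] at h0
      simpa using h0
    have key : ∀ e : G.Dart, nbMatrix G d e * v e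
        = (if e.toProd.2 = d.toProd.1 then v e else 0) - (if e = d.symm then v e else 0) := by
      intro e
      by_cases h1 : e = d.symm
      · subst h1
        simp [nbMatrix]
      · by_cases h2 : e.toProd.2 = d.toProd.1
        · have h3 : e.toProd.1 ≠ d.toProd.2 := by
            intro h4
            apply h1
            apply SimpleGraph.Dart.ext
            rw [SimpleGraph.Dart.symm_toProd, Prod.ext_iff]
            exact ⟨h4, h2⟩
          simp [nbMatrix, h2, h3, h1]
        · simp [nbMatrix, h2, h1]
    rw [Finset.sum_congr rfl (fun e _ => key e), Finset.sum_sub_distrib] at h1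
    rw [Finset.sum_ite_eq' Finset.univ d.symm v] at h1
    simp only [Finset.mem_univ, if_true] at h1
    rw [← hfx d.toProd.1] at h1
    exact h1.symm
  -- edge equation
  have hee : ∀ d : G.Dart, (1 - lam ^ 2) * v d = f d.toProd.2 - lam * f d.toProd.1 := by
    intro d
    have h1 := hde d
    have h2 := hde d.symm
    rw [SimpleGraph.Dart.symm_symm] at h2
    simp only [SimpleGraph.Dart.symm_toProd, Prod.fst_swap, Prod.snd_swap] at h2
    linear_combination h2 - lam * h1
  -- vertex equation
  have hveq : ∀ x : V, lam * (∑ y ∈ G.neighborFinset x, f y)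
      = ((G.degree x : ℂ) - 1 + lam ^ 2) * f x := by
    intro x
    have h1 : (1 - lam ^ 2) * f x
        = ∑ e : G.Dart, (if e.toProd.2 = x then f x - lam * f e.toProd.1 else 0) := by
      rw [hfx x, Finset.mul_sum]
      refine Finset.sum_congr rfl (fun e _ => ?_)
      by_cases h : e.toProd.2 = x
      · rw [if_pos h, if_pos h, ← h]
        exact hee e
      · simp [h]
    have h2 : ∑ e : G.Dart, (if e.toProd.2 = x then f x - lam * f e.toProd.1 else 0)
        = (∑ e : G.Dart, (if e.toProd.2 = x then f x else 0))
          - lam * ∑ e : G.Dart, (if e.toProd.2 = x then f e.toProd.1 else 0) := by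
      rw [Finset.mul_sum, ← Finset.sum_sub_distrib]
      refine Finset.sum_congr rfl (fun e _ => ?_)
      by_cases h : e.toProd.2 = x <;> simp [h]
    have h3 : ∑ e : G.Dart, (if e.toProd.2 = x then f x else 0) = (G.degree x : ℂ) * f x := by
      rw [sum_darts_to G (fun _ => f x) x, Finset.sum_const, ← G.card_neighborFinset_eq_degree,
        nsmul_eq_mul]
    have h4 := sum_darts_to G f x
    linear_combination h1 + h2 + h3 - lam * h4
  -- realness of the quadratic form
  set a : ℂ := ∑ x : V, (starRingEnd ℂ) (f x) * ∑ y ∈ G.neighborFinset x, f y with hadef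
  have h1a : a = ∑ d : G.Dart, (starRingEnd ℂ) (f d.toProd.2) * f d.toProd.1 := by
    rw [hadef]
    rw [show (∑ x : V, (starRingEnd ℂ) (f x) * ∑ y ∈ G.neighborFinset x, f y)
        = ∑ x : V, ∑ y ∈ G.neighborFinset x, (starRingEnd ℂ) (f x) * f y from
      Finset.sum_congr rfl (fun x _ => Finset.mul_sum _ _ _)]
    exact (sum_over_darts G (fun y x => (starRingEnd ℂ) (f x) * f y)).symm
  have h2a : (starRingEnd ℂ) a = ∑ d : G.Dart, f d.toProd.2 * (starRingEnd ℂ) (f d.toProd.1) := by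
    rw [hadef, map_sum]
    rw [show (∑ x : V, (starRingEnd ℂ) ((starRingEnd ℂ) (f x) * ∑ y ∈ G.neighborFinset x, f y))
        = ∑ x : V, ∑ y ∈ G.neighborFinset x, f x * (starRingEnd ℂ) (f y) from
      Finset.sum_congr rfl (fun x _ => by
        rw [RingHom.map_mul, Complex.conj_conj, map_sum, Finset.mul_sum])]
    exact (sum_over_darts G (fun y x => f x * (starRingEnd ℂ) (f y))).symm
  have hstar : (starRingEnd ℂ) a = a := by
    rw [h2a, sum_over_darts_symm G (fun s t => f t * (starRingEnd ℂ) (f s)), h1a]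
    exact Finset.sum_congr rfl (fun d _ => mul_comm _ _)
  have hare : a = ((a.re : ℝ) : ℂ) := (Complex.conj_eq_iff_re.mp hstar).symm
  -- the master identity
  set b : ℝ := ∑ x : V, ((G.degree x : ℝ) - 1) * Complex.normSq (f x) with hbdef
  set c : ℝ := ∑ x : V, Complex.normSq (f x) with hcdef
  have hmaster : lam * a = (b : ℂ) + lam ^ 2 * (c : ℂ) := by
    rw [hadef, Finset.mul_sum]
    have step : ∀ x : V, lam * ((starRingEnd ℂ) (f x) * ∑ y ∈ G.neighborFinset x, f y)
        = ((((G.degree x : ℝ) - 1) * Complex.normSq (f x) : ℝ) : ℂ)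
          + lam ^ 2 * ((Complex.normSq (f x) : ℝ) : ℂ) := by
      intro x
      have h5 : lam * ((starRingEnd ℂ) (f x) * ∑ y ∈ G.neighborFinset x, f y)
          = (starRingEnd ℂ) (f x) * (lam * ∑ y ∈ G.neighborFinset x, f y) := by ring
      rw [h5, hveq x]
      have h6 : (starRingEnd ℂ) (f x) * f x = (Complex.normSq (f x) : ℂ) := by
        rw [mul_comm, Complex.mul_conj]
      push_cast
      linear_combination (((G.degree x : ℂ)) - 1 + lam ^ 2) * h6
    rw [Finset.sum_congr rfl (fun x _ => step x), Finset.sum_add_distrib]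
    rw [hbdef, hcdef]
    push_cast
    rw [← Finset.mul_sum]
  -- b = c
  have hbc : b = c := by
    have h7 := hmaster
    rw [hare] at h7
    have hRe := congrArg Complex.re h7
    have hIm := congrArg Complex.im h7
    simp only [Complex.mul_re, Complex.mul_im, Complex.add_re, Complex.add_im,
      Complex.ofReal_re, Complex.ofReal_im, pow_two] at hRe hIm
    have halpha : a.re = 2 * lam.re * c := by
      have h8 : lam.im * (a.re - 2 * lam.re * c) = 0 := by linarith [hIm]
      rcases mul_eq_zero.mp h8 with h | h
      · exact absurd h him
      · linarith
    linear_combination (-1:ℝ) * hRe + lam.re * halpha + c * hnorm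
  -- support of f is on degree-2 vertices
  have hd2 : ∀ x : V, f x ≠ 0 → G.degree x = 2 := by
    have hzero : ∑ x : V, ((G.degree x : ℝ) - 2) * Complex.normSq (f x) = 0 := by
      have : ∑ x : V, ((G.degree x : ℝ) - 2) * Complex.normSq (f x) = b - c := by
        rw [hbdef, hcdef, ← Finset.sum_sub_distrib]
        exact Finset.sum_congr rfl (fun x _ => by ring)
      rw [this, hbc, sub_self]
    have hnn : ∀ x ∈ Finset.univ, (0:ℝ) ≤ ((G.degree x : ℝ) - 2) * Complex.normSq (f x) := by
      intro x _
      apply mul_nonneg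
      · have := hmin x
        have : (2:ℝ) ≤ (G.degree x : ℝ) := by exact_mod_cast this
        linarith
      · exact Complex.normSq_nonneg _
    have hall := (Finset.sum_eq_zero_iff_of_nonneg hnn).mp hzero
    intro x hfx
    have h9 := hall x (Finset.mem_univ x)
    rcases mul_eq_zero.mp h9 with h | h
    · have : (G.degree x : ℝ) = 2 := by linarith
      exact_mod_cast this
    · exact absurd (Complex.normSq_eq_zero.mp h) hfx
  -- refined vertex equation
  have hveq2 : ∀ x : V, lam * ∑ y ∈ G.neighborFinset x, f y = (1 + lam ^ 2) * f x := by
    intro x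
    by_cases hfx : f x = 0
    · rw [hveq x, hfx, mul_zero, mul_zero]
    · rw [hveq x, hd2 x hfx]
      norm_num
  -- f is nonzero somewhere
  have hfne : ∃ x : V, f x ≠ 0 := by
    by_contra hcon
    push_neg at hcon
    apply hv0
    funext d
    have h10 := hee d
    rw [hcon, hcon, mul_zero, sub_zero] at h10
    have h11 : 1 - lam ^ 2 ≠ 0 := fun hh => hsq (by linear_combination -hh)
    have h12 : v d = 0 := (mul_eq_zero.mp h10).resolve_left h11
    simpa using h12
  -- choose a starting vertex
  obtain ⟨x₀, hx₀⟩ := hfne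
  have hdeg₀ : G.degree x₀ = 2 := hd2 x₀ hx₀
  obtain ⟨u, w, huw, hN⟩ := Finset.card_eq_two.mp
    (by rw [G.card_neighborFinset_eq_degree]; exact hdeg₀)
  have hu : G.Adj x₀ u := (G.mem_neighborFinset x₀ u).mp (hN ▸ Finset.mem_insert_self u {w})
  have hw : G.Adj x₀ w := (G.mem_neighborFinset x₀ w).mp
    (hN ▸ Finset.mem_insert_of_mem (Finset.mem_singleton_self w))
  have hjun : lam * (f u + f w) = (1 + lam ^ 2) * f x₀ := by
    have := hveq2 x₀
    rw [hN, Finset.sum_pair huw] at this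
    exact this
  -- the periodic (non-terminating) case, abstracted
  have hper_case : ∀ y : V, G.Adj x₀ y →
      (∀ k, 1 ≤ k → f (gWalk G x₀ y k) ≠ 0) → ∃ q : ℕ, 0 < q ∧ lam ^ q = 1 := by
    intro y hy hinf
    set p : ℕ → V := gWalk G x₀ y with hp
    have hrecAll : ∀ n, lam * (f (p n) + f (p (n + 2))) = (1 + lam ^ 2) * f (p (n + 1)) :=
      fun n => gWalk_rec G lam f hd2 hveq2 hy n (fun k hk1 _ => hinf k hk1)
    obtain ⟨i0, j0, hne0, heq0⟩ :=
      Finite.exists_ne_map_eq_of_infinite (fun n : ℕ => (p n, p (n + 1)))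
    rcases Prod.mk.injEq _ _ _ _ ▸ heq0 with ⟨hfst, hsnd⟩
    -- arrange i < j
    obtain ⟨i, j, hij, hpi, hpi1⟩ : ∃ i j : ℕ, i < j ∧ p j = p i ∧ p (j + 1) = p (i + 1) := by
      rcases lt_or_gt_of_ne hne0 with h | h
      · exact ⟨i0, j0, h, hfst.symm, hsnd.symm⟩
      · exact ⟨j0, i0, h, hfst, hsnd⟩
    set P := j - i with hP
    have hiP : i + P = j := by omega
    have hper := gWalk_per G i P (by rw [hiP]; exact hpi) (by rw [hiP]; exact hpi1)
    refine ⟨P, by omega, ?_⟩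
    apply nb_periodic lam hl0 hsq (fun n => f (p n)) hrecAll i P (by omega)
    · intro n hn
      have : p (n + P) = p n := by
        have := hper (n - i)
        rw [show i + (n - i) + P = n + P by omega, show i + (n - i) = n by omega] at this
        exact this
      simp only [this]
    · exact hx₀
  by_cases hpinf : ∀ k, 1 ≤ k → f (gWalk G x₀ u k) ≠ 0
  · exact hper_case u hu hpinf
  by_cases hqinf : ∀ k, 1 ≤ k → f (gWalk G x₀ w k) ≠ 0
  · exact hper_case w hw hqinf
  -- both walks terminate: Dirichlet case
  push_neg at hpinf hqinf
  have hexN : ∃ k, 1 ≤ k ∧ f (gWalk G x₀ u k) = 0 := hpinf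
  have hexM : ∃ k, 1 ≤ k ∧ f (gWalk G x₀ w k) = 0 := hqinf
  set N := Nat.find hexN with hNdef
  set M := Nat.find hexM with hMdef
  obtain ⟨hN1, hNz⟩ := Nat.find_spec hexN
  obtain ⟨hM1, hMz⟩ := Nat.find_spec hexM
  have hNmin : ∀ k, 1 ≤ k → k < N → f (gWalk G x₀ u k) ≠ 0 := by
    intro k hk1 hk2
    have := Nat.find_min hexN hk2
    intro hzero
    exact this ⟨hk1, hzero⟩
  have hMmin : ∀ k, 1 ≤ k → k < M → f (gWalk G x₀ w k) ≠ 0 := by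
    intro k hk1 hk2
    have := Nat.find_min hexM hk2
    intro hzero
    exact this ⟨hk1, hzero⟩
  set g : ℕ → ℂ := fun n => if n ≤ M then f (gWalk G x₀ w (M - n)) else f (gWalk G x₀ u (n - M))
    with hgdef
  have hg : ∀ n, g n = if n ≤ M then f (gWalk G x₀ w (M - n)) else f (gWalk G x₀ u (n - M)) :=
    fun n => rfl
  have hrecg : ∀ n, n + 1 ≤ M + N - 1 →
      lam * (g n + g (n + 2)) = (1 + lam ^ 2) * g (n + 1) := by
    intro n hn
    rcases lt_trichotomy (n + 1) M with h | h | h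
    · -- q-side
      set m := M - n - 2 with hm
      have e0 : n ≤ M := by omega
      have e1 : M - n = m + 2 := by omega
      have e2 : M - (n + 1) = m + 1 := by omega
      have e3 : M - (n + 2) = m := by omega
      rw [hg n, hg (n + 1), hg (n + 2), if_pos e0, if_pos (by omega : n + 1 ≤ M),
        if_pos (by omega : n + 2 ≤ M), e1, e2, e3]
      have hrec := gWalk_rec G lam f hd2 hveq2 hw m
        (fun k hk1 hk2 => hMmin k hk1 (by omega))
      linear_combination hrec
    · -- junction
      rw [hg n, hg (n + 1), hg (n + 2), if_pos (by omega : n ≤ M),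
        if_pos (by omega : n + 1 ≤ M), if_neg (by omega : ¬ n + 2 ≤ M),
        show M - n = 1 by omega, show M - (n + 1) = 0 by omega,
        show n + 2 - M = 1 by omega]
      have hq1 : gWalk G x₀ w 1 = w := rfl
      have hq0 : gWalk G x₀ w 0 = x₀ := rfl
      have hp1 : gWalk G x₀ u 1 = u := rfl
      rw [hq1, hq0, hp1]
      linear_combination hjun
    · -- p-side
      set m := n - M with hm
      have e1 : n + 1 - M = m + 1 := by omega
      have e2 : n + 2 - M = m + 2 := by omega
      have hgn : g n = f (gWalk G x₀ u m) := by
        rcases Nat.eq_or_lt_of_le (by omega : M ≤ n) with hMn | hMn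
        · rw [hg n, if_pos (by omega : n ≤ M), show M - n = 0 by omega,
            show m = 0 by omega]
          rfl
        · rw [hg n, if_neg (by omega : ¬ n ≤ M)]
      rw [hgn, hg (n + 1), hg (n + 2), if_neg (by omega : ¬ n + 1 ≤ M),
        if_neg (by omega : ¬ n + 2 ≤ M), e1, e2]
      exact gWalk_rec G lam f hd2 hveq2 hu m (fun k hk1 hk2 => hNmin k hk1 (by omega))
  refine ⟨2 * (M + N - 1 + 1), by omega, ?_⟩
  apply nb_dirichlet lam hl0 hsq g (M + N - 1) hrecg
  · rw [hg 0, if_pos (by omega : 0 ≤ M)]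
    simpa using hMz
  · rw [show M + N - 1 + 1 = M + N by omega, hg (M + N)]
    rw [if_neg (by omega : ¬ M + N ≤ M), show M + N - M = N by omega]
    exact hNz
  · exact (by omega : M ≤ M + N - 1 + 1)
  · rw [hg M, if_pos (le_refl M), Nat.sub_self]
    exact hx₀
end

section
/- If H is the r-subdivision of G, then det(tI − B_H) = det(t^r I − B_G), where B_H and B_G are the respective non-backtracking matrices. In particular, the non-backtracking eigenvalues of H are exactly the r-th roots of the non-backtracking eigenvalues of G, counted with algebraic multiplicity. -/
open SimpleGraph Matrix

/-- The `r`-subdivision of a simple graph `G`: each edge `e` of `G`, with endpoints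
`(Quot.out e).1` and `(Quot.out e).2`, is replaced by the path
`(Quot.out e).1, (e,0), (e,1), …, (e,r-2), (Quot.out e).2` through `r − 1` new
degree-2 nodes. (For `r = 1` the subdivision is `G` itself.) -/
def subdiv {V : Type} [Fintype V] [DecidableEq V] (G : SimpleGraph V) (r : ℕ) :
    SimpleGraph (V ⊕ (G.edgeSet × Fin (r - 1))) where
  Adj x y :=
    match x, y with
    | Sum.inl a, Sum.inl b => r = 1 ∧ G.Adj a b
    | Sum.inl a, Sum.inr (e, i) =>
        (a = (Quot.out (e : Sym2 V)).1 ∧ (i : ℕ) = 0) ∨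
          (a = (Quot.out (e : Sym2 V)).2 ∧ (i : ℕ) = r - 2)
    | Sum.inr (e, i), Sum.inl b =>
        (b = (Quot.out (e : Sym2 V)).1 ∧ (i : ℕ) = 0) ∨
          (b = (Quot.out (e : Sym2 V)).2 ∧ (i : ℕ) = r - 2)
    | Sum.inr (e, i), Sum.inr (f, j) => e = f ∧ ((i : ℕ) + 1 = (j : ℕ) ∨ (j : ℕ) + 1 = (i : ℕ))
  symm := by
    constructor
    intro x y h
    rcases x with a | ⟨e, i⟩ <;> rcases y with b | ⟨f, j⟩ <;> simp_all
    · exact h.2.symm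
    · tauto
  loopless := by
    constructor
    intro x h
    rcases x with a | ⟨e, i⟩
    · exact G.loopless.irrefl a h.2
    · rcases h with ⟨-, h | h⟩ <;> omega

noncomputable instance subdivAdjDec {V : Type} [Fintype V] [DecidableEq V] (G : SimpleGraph V)
    (r : ℕ) : DecidableRel (subdiv G r).Adj := fun _ _ => Classical.propDecidable _

namespace NBaux

def cmat {n : Type} [DecidableEq n] (r : ℕ) (B : Matrix n n ℂ) :
    Matrix (n × Fin r) (n × Fin r) ℂ :=
  fun p q => (if (q.2 : ℕ) + 1 = (p.2 : ℕ) ∧ q.1 = p.1 then 1 else 0) +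
    (if (p.2 : ℕ) = 0 ∧ (q.2 : ℕ) = r - 1 then B p.1 q.1 else 0)

lemma cmat_det {n : Type} [Fintype n] [DecidableEq n] (r : ℕ) (hr : 1 ≤ r) (B : Matrix n n ℂ)
    (t : ℂ) (ht : t ≠ 0) :
    (t • (1 : Matrix (n × Fin r) (n × Fin r) ℂ) - cmat r B).det
      = (t ^ r • (1 : Matrix n n ℂ) - B).det := by
  induction r, hr using Nat.le_induction generalizing B with
  | base =>
    have h : t • (1 : Matrix (n × Fin 1) (n × Fin 1) ℂ) - cmat 1 B
        = (t ^ 1 • (1 : Matrix n n ℂ) - B).submatrix (Equiv.prodUnique n (Fin 1))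
            (Equiv.prodUnique n (Fin 1)) := by
      ext ⟨d, i⟩ ⟨e', j⟩
      have hij : i = j := Fin.ext (by omega)
      have hi : (i : ℕ) = 0 := by omega
      simp [cmat, hi, hij, Matrix.one_apply, Prod.ext_iff, Matrix.sub_apply, Equiv.prodUnique]
    rw [h, Matrix.det_submatrix_equiv_self]
  | succ r hr ih =>
    classical
    let σ : (n × Fin r) ⊕ n ≃ n × Fin (r + 1) :=
      { toFun := fun x => match x with
          | Sum.inl (d, i) => (d, i.castSucc)
          | Sum.inr d => (d, Fin.last r)
        invFun := fun p => if h : (p.2 : ℕ) < r then Sum.inl (p.1, ⟨p.2, h⟩) else Sum.inr p.1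
        left_inv := by
          rintro (⟨d, i⟩ | d) <;> simp [Fin.castSucc, Fin.last, Fin.is_lt]
        right_inv := by
          rintro ⟨d, i⟩
          by_cases h : (i : ℕ) < r <;> simp [h, Fin.castSucc, Fin.last, Fin.ext_iff] <;> omega }
    have hσl : ∀ (d : n) (i : Fin r), σ (Sum.inl (d, i)) = (d, i.castSucc) := fun _ _ => rfl
    have hσr : ∀ d : n, σ (Sum.inr d) = (d, Fin.last r) := fun _ => rfl
    have hS : (t • (1 : Matrix (n × Fin (r+1)) (n × Fin (r+1)) ℂ) - cmat (r+1) B).det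
        = ((t • (1 : Matrix (n × Fin (r+1)) (n × Fin (r+1)) ℂ) - cmat (r+1) B).submatrix σ σ).det :=
      (Matrix.det_submatrix_equiv_self σ _).symm
    set S : Matrix (n × Fin r) (n × Fin r) ℂ :=
      fun p q => if (q.2 : ℕ) + 1 = (p.2 : ℕ) ∧ q.1 = p.1 then 1 else 0 with hSdef
    set Bk : Matrix (n × Fin r) n ℂ :=
      fun p e' => -(if (p.2 : ℕ) = 0 then B p.1 e' else 0) with hBkdef
    set Ck : Matrix n (n × Fin r) ℂ :=
      fun d q => -(if (q.2 : ℕ) = r - 1 ∧ q.1 = d then 1 else 0) with hCkdef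
    have hblocks : (t • (1 : Matrix (n × Fin (r+1)) (n × Fin (r+1)) ℂ) - cmat (r+1) B).submatrix σ σ
        = fromBlocks (t • 1 - S) Bk Ck (t • 1) := by
      ext x y
      rcases x with ⟨d, i⟩ | d <;> rcases y with ⟨e', j⟩ | e' <;>
        simp only [fromBlocks_apply₁₁, fromBlocks_apply₁₂, fromBlocks_apply₂₁, fromBlocks_apply₂₂,
          Matrix.sub_apply, Matrix.smul_apply] <;>
        simp [hσl, hσr, cmat, Prod.ext_iff, Fin.ext_iff, Matrix.one_apply, hSdef, hBkdef, hCkdef]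
      · exact fun _ h => absurd h (by omega)
      · split_ifs <;> first | ring1 | (exfalso; omega) | (exfalso; simp_all <;> omega)
      · split_ifs <;> first | ring1 | (exfalso; omega) | (exfalso; simp_all <;> omega)
      · exact fun h => absurd h (by omega)
    letI : Invertible (t • (1 : Matrix n n ℂ)) :=
      ⟨t⁻¹ • 1, by rw [Matrix.smul_mul, Matrix.one_mul, smul_smul, inv_mul_cancel₀ ht, one_smul],
        by rw [Matrix.smul_mul, Matrix.one_mul, smul_smul, mul_inv_cancel₀ ht, one_smul]⟩
    have hinv : ⅟(t • (1 : Matrix n n ℂ)) = t⁻¹ • 1 := rfl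
    have hschur : (t • 1 - S) - Bk * ⅟(t • (1 : Matrix n n ℂ)) * Ck
        = t • 1 - cmat r (t⁻¹ • B) := by
      rw [hinv, Matrix.mul_smul, Matrix.mul_one, Matrix.smul_mul]
      have hBC : Bk * Ck = fun p q =>
          if (p.2 : ℕ) = 0 ∧ (q.2 : ℕ) = r - 1 then B p.1 q.1 else 0 := by
        ext ⟨d, i⟩ ⟨e', j⟩
        rw [Matrix.mul_apply]
        have hterm : ∀ c, Bk (d, i) c * Ck c (e', j)
            = if c = e' then (if (i : ℕ) = 0 ∧ (j : ℕ) = r - 1 then B d c else 0) else 0 := by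
          intro c
          simp only [hBkdef, hCkdef, neg_mul_neg, mul_ite, ite_mul, one_mul, mul_one, mul_zero,
            zero_mul]
          split_ifs <;> simp_all
        rw [Finset.sum_congr rfl fun c _ => hterm c, Finset.sum_ite_eq' Finset.univ e']
        simp
      rw [hBC]
      ext ⟨d, i⟩ ⟨e', j⟩
      simp only [Matrix.sub_apply, Matrix.smul_apply, Matrix.one_apply, cmat, smul_eq_mul, Pi.smul_apply,
        Matrix.smul_apply]
      by_cases h1 : (j : ℕ) + 1 = (i : ℕ) ∧ e' = d <;>
        by_cases h2 : (i : ℕ) = 0 ∧ (j : ℕ) = r - 1 <;>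
          simp [hSdef, h1, h2] <;> erw [Matrix.smul_apply] <;> simp [h1, h2] <;> first | ring1 | omega | (exfalso; omega)
    rw [hS, hblocks, det_fromBlocks₂₂, hschur, ih (t⁻¹ • B)]
    have h2 : t ^ (r+1) • (1 : Matrix n n ℂ) - B = t • (t ^ r • 1 - t⁻¹ • B) := by
      rw [smul_sub, smul_smul, smul_smul, mul_inv_cancel₀ ht, one_smul, ← pow_succ']
    rw [h2, Matrix.det_smul, Matrix.det_smul, Matrix.det_one, mul_one]



variable {V : Type} [Fintype V] [DecidableEq V] {G : SimpleGraph V} [DecidableRel G.Adj]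

/-- First chosen endpoint of an edge. -/
noncomputable def o1 (e : G.edgeSet) : V := (Quot.out (e : Sym2 V)).1

/-- Second chosen endpoint of an edge. -/
noncomputable def o2 (e : G.edgeSet) : V := (Quot.out (e : Sym2 V)).2

lemma mk_o1_o2 (e : G.edgeSet) : s(o1 e, o2 e) = (e : Sym2 V) := by
  show Sym2.mk (Quot.out (e : Sym2 V)).1 (Quot.out (e : Sym2 V)).2 = _
  exact Quot.out_eq _

lemma adj_o (e : G.edgeSet) : G.Adj (o1 e) (o2 e) := by
  rw [← SimpleGraph.mem_edgeSet, mk_o1_o2]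
  exact e.2

lemma o_ne (e : G.edgeSet) : o1 e ≠ o2 e := (adj_o e).ne

/-- The edge of a dart, as an element of the edge set. -/
def edg (d : G.Dart) : G.edgeSet := ⟨d.edge, d.edge_mem⟩

lemma dart_cases (d : G.Dart) :
    (d.fst = o1 (edg d) ∧ d.snd = o2 (edg d)) ∨ (d.fst = o2 (edg d) ∧ d.snd = o1 (edg d)) := by
  have h : s(d.fst, d.snd) = s(o1 (edg d), o2 (edg d)) := by
    rw [mk_o1_o2]; rfl
  rw [Sym2.eq_iff] at h
  tauto

lemma edg_eq (d e : G.Dart) (h : edg d = edg e) : d = e ∨ d = e.symm := by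
  rw [← dart_edge_eq_iff]
  exact congrArg Subtype.val h

lemma edg_symm (d : G.Dart) : edg d.symm = edg d := Subtype.ext (d.edge_symm)


variable (r : ℕ)

/-- Node at position `k` (0 ≤ k ≤ r) along the subdivided path of dart `d`. -/
noncomputable def qnode (d : G.Dart) (k : ℕ) : V ⊕ (G.edgeSet × Fin (r - 1)) :=
  if h : 1 ≤ k ∧ k ≤ r - 1 then
    Sum.inr (edg d, ⟨if d.fst = o1 (edg d) then k - 1 else r - 1 - k, by split <;> omega⟩)
  else if k = 0 then Sum.inl d.fst else Sum.inl d.snd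

lemma qnode_zero (d : G.Dart) : qnode r d 0 = Sum.inl d.fst := by
  unfold qnode
  rw [dif_neg (by omega), if_pos rfl]

lemma qnode_top (d : G.Dart) {k : ℕ} (hr : 1 ≤ r) (hk : r ≤ k) :
    qnode r d k = Sum.inl d.snd := by
  unfold qnode
  rw [dif_neg (by omega), if_neg (by omega)]

lemma qnode_mid (d : G.Dart) {k : ℕ} (h1 : 1 ≤ k) (h2 : k ≤ r - 1) :
    qnode r d k = Sum.inr (edg d,
      ⟨if d.fst = o1 (edg d) then k - 1 else r - 1 - k, by split <;> omega⟩) := by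
  unfold qnode
  rw [dif_pos ⟨h1, h2⟩]

lemma qnode_inj (d : G.Dart) {a b : ℕ} (hr : 1 ≤ r) (ha : a ≤ r) (hb : b ≤ r)
    (h : qnode r d a = qnode r d b) : a = b := by
  by_cases h1 : 1 ≤ a ∧ a ≤ r - 1 <;> by_cases h2 : 1 ≤ b ∧ b ≤ r - 1
  · rw [qnode_mid r d h1.1 h1.2, qnode_mid r d h2.1 h2.2] at h
    simp only [Sum.inr.injEq, Prod.mk.injEq, Fin.mk.injEq, true_and] at h
    split at h <;> omega
  · rcases Nat.eq_zero_or_pos b with hb0 | hb1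
    · rw [hb0, qnode_mid r d h1.1 h1.2, qnode_zero] at h
      exact absurd h (by simp)
    · rw [qnode_mid r d h1.1 h1.2, qnode_top r d hr (by omega)] at h
      exact absurd h (by simp)
  · rcases Nat.eq_zero_or_pos a with ha0 | ha1
    · rw [ha0, qnode_mid r d h2.1 h2.2, qnode_zero] at h
      exact absurd h.symm (by simp)
    · rw [qnode_mid r d h2.1 h2.2, qnode_top r d hr (by omega)] at h
      exact absurd h.symm (by simp)
  · rcases Nat.eq_zero_or_pos a with ha0 | ha1 <;> rcases Nat.eq_zero_or_pos b with hb0 | hb1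
    · omega
    · rw [ha0, qnode_zero, qnode_top r d hr (by omega)] at h
      simp only [Sum.inl.injEq] at h
      exact absurd h d.fst_ne_snd
    · rw [hb0, qnode_zero, qnode_top r d hr (by omega)] at h
      simp only [Sum.inl.injEq] at h
      exact absurd h.symm d.fst_ne_snd
    · omega

lemma qnode_symm (d : G.Dart) {k : ℕ} (hr : 1 ≤ r) (hk : k ≤ r) :
    qnode r d.symm k = qnode r d (r - k) := by
  have hfs : d.symm.fst = d.snd := rfl
  have hss : d.symm.snd = d.fst := rfl
  have hed : edg d.symm = edg d := edg_symm d
  have hdir : d.symm.fst = o1 (edg d.symm) ↔ ¬ d.fst = o1 (edg d) := by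
    rw [hfs, hed]
    rcases dart_cases d with ⟨h1, h2⟩ | ⟨h1, h2⟩
    · constructor
      · intro h; exact absurd (h2.symm.trans h) (o_ne (edg d)).symm
      · intro h; exact absurd h1 h
    · simp [h1, h2]
      exact Ne.symm (o_ne (edg d))
  by_cases h1 : 1 ≤ k ∧ k ≤ r - 1
  · have h1' : 1 ≤ r - k ∧ r - k ≤ r - 1 := by omega
    rw [qnode_mid r d.symm h1.1 h1.2, qnode_mid r d h1'.1 h1'.2]
    simp only [Sum.inr.injEq, Prod.mk.injEq, Fin.mk.injEq]
    refine ⟨hed, ?_⟩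
    by_cases hd : d.fst = o1 (edg d)
    · rw [if_neg (by rw [hdir]; exact fun h => h hd), if_pos hd]
      omega
    · rw [if_pos (hdir.mpr hd), if_neg hd]
      omega
  · rcases Nat.eq_zero_or_pos k with hk0 | hk1
    · subst hk0
      rw [qnode_zero, hfs, Nat.sub_zero, qnode_top r d hr le_rfl]
    · have hkr : k = r := by omega
      rw [qnode_top r d.symm hr (by omega), hss, hkr, Nat.sub_self, qnode_zero]


lemma subdiv_adj_inl_inl {a b : V} :
    (subdiv G r).Adj (Sum.inl a) (Sum.inl b) ↔ r = 1 ∧ G.Adj a b := Iff.rfl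

lemma subdiv_adj_inl_inr {a : V} {e : G.edgeSet} {i : Fin (r-1)} :
    (subdiv G r).Adj (Sum.inl a) (Sum.inr (e, i)) ↔
      ((a = o1 e ∧ (i : ℕ) = 0) ∨ (a = o2 e ∧ (i : ℕ) = r - 2)) := Iff.rfl

lemma subdiv_adj_inr_inl {b : V} {e : G.edgeSet} {i : Fin (r-1)} :
    (subdiv G r).Adj (Sum.inr (e, i)) (Sum.inl b) ↔
      ((b = o1 e ∧ (i : ℕ) = 0) ∨ (b = o2 e ∧ (i : ℕ) = r - 2)) := Iff.rfl

lemma subdiv_adj_inr_inr {e f : G.edgeSet} {i j : Fin (r-1)} :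
    (subdiv G r).Adj (Sum.inr (e, i)) (Sum.inr (f, j)) ↔
      (e = f ∧ ((i : ℕ) + 1 = (j : ℕ) ∨ (j : ℕ) + 1 = (i : ℕ))) := Iff.rfl

lemma fin_val_mk {m : ℕ} (v : ℕ) (h : v < m) : ((⟨v, h⟩ : Fin m) : ℕ) = v := rfl

lemma qnode_adj (d : G.Dart) {k : ℕ} (hk : k < r) :
    (subdiv G r).Adj (qnode r d k) (qnode r d (k+1)) := by
  have hr : 1 ≤ r := by omega
  rcases Nat.eq_zero_or_pos k with hk0 | hk1
  · subst hk0
    rw [qnode_zero]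
    by_cases hr1 : r = 1
    · rw [qnode_top r d hr (by omega)]
      exact (subdiv_adj_inl_inl (r := r)).mpr ⟨hr1, d.adj⟩
    · rw [qnode_mid r d le_rfl (by omega)]
      rw [subdiv_adj_inl_inr]
      rcases dart_cases d with ⟨hf, hs⟩ | ⟨hf, hs⟩
      · left
        refine ⟨hf, ?_⟩
        rw [fin_val_mk, if_pos hf]
      · right
        refine ⟨hf, ?_⟩
        rw [fin_val_mk, if_neg (by rw [hf]; exact Ne.symm (o_ne (edg d)))]
        omega
  · by_cases hk1' : k + 1 ≤ r - 1
    · rw [qnode_mid r d hk1 (by omega), qnode_mid r d (by omega) hk1']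
      rw [subdiv_adj_inr_inr]
      refine ⟨rfl, ?_⟩
      rw [fin_val_mk, fin_val_mk]
      split <;> omega
    · have hkr : k = r - 1 := by omega
      rw [qnode_mid r d hk1 (by omega), qnode_top r d hr (by omega)]
      rw [subdiv_adj_inr_inl]
      rcases dart_cases d with ⟨hf, hs⟩ | ⟨hf, hs⟩
      · right
        refine ⟨hs, ?_⟩
        rw [fin_val_mk, if_pos hf]
        omega
      · left
        refine ⟨hs, ?_⟩
        rw [fin_val_mk, if_neg (by rw [hf]; exact Ne.symm (o_ne (edg d)))]
        omega

/-- The bijection sending `(d, k)` to the `k`-th dart along the subdivided path of `d`. -/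
noncomputable def psi (p : G.Dart × Fin r) : (subdiv G r).Dart :=
  ⟨(qnode r p.1 p.2, qnode r p.1 ((p.2 : ℕ) + 1)), qnode_adj r p.1 p.2.is_lt⟩

lemma psi_inj : Function.Injective (psi (G := G) r) := by
  rintro ⟨d, k⟩ ⟨d', k'⟩ h
  have hr : 1 ≤ r := by have := k.is_lt; omega
  have h1 : qnode r d k = qnode r d' k' :=
    congrArg (fun x : (subdiv G r).Dart => x.toProd.1) h
  have h2 : qnode r d ((k : ℕ)+1) = qnode r d' ((k' : ℕ)+1) :=
    congrArg (fun x : (subdiv G r).Dart => x.toProd.2) h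
  clear h
  have hklt := k.is_lt
  have hklt' := k'.is_lt
  by_cases hm : 1 ≤ (k : ℕ) ∧ (k : ℕ) ≤ r - 1
  · by_cases hm' : 1 ≤ (k' : ℕ) ∧ (k' : ℕ) ≤ r - 1
    · have h1' := h1
      rw [qnode_mid r d hm.1 hm.2, qnode_mid r d' hm'.1 hm'.2] at h1'
      simp only [Sum.inr.injEq, Prod.mk.injEq, Fin.mk.injEq] at h1'
      rcases edg_eq d d' h1'.1 with rfl | rfl
      · have hkk : (k : ℕ) = (k' : ℕ) := by
          have hv := h1'.2
          split at hv <;> omega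
        simp only [Prod.mk.injEq, Fin.ext_iff]
        exact ⟨trivial, hkk⟩
      · exfalso
        rw [qnode_symm r d' hr (by omega)] at h1 h2
        have e1 : r - (k : ℕ) = (k' : ℕ) :=
          qnode_inj r d' hr (by omega) (by omega) h1
        have e2 : r - ((k : ℕ) + 1) = (k' : ℕ) + 1 :=
          qnode_inj r d' hr (by omega) (by omega) h2
        omega
    · exfalso
      have hk0' : (k' : ℕ) = 0 := by omega
      rw [hk0', qnode_mid r d hm.1 hm.2, qnode_zero] at h1
      exact absurd h1 (by simp)
  · have hk0 : (k : ℕ) = 0 := by omega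
    by_cases hm' : 1 ≤ (k' : ℕ) ∧ (k' : ℕ) ≤ r - 1
    · exfalso
      rw [hk0, qnode_zero, qnode_mid r d' hm'.1 hm'.2] at h1
      exact absurd h1 (by simp)
    · have hk0' : (k' : ℕ) = 0 := by omega
      rw [hk0, qnode_zero, hk0', qnode_zero] at h1
      simp only [Sum.inl.injEq] at h1
      rw [hk0, hk0'] at h2
      by_cases hr1 : r = 1
      · rw [qnode_top r d hr (by omega), qnode_top r d' hr (by omega)] at h2
        simp only [Sum.inl.injEq] at h2
        have hdd : d = d' := Dart.ext _ _ (Prod.ext_iff.mpr ⟨h1, h2⟩)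
        simp only [Prod.mk.injEq, Fin.ext_iff]
        exact ⟨hdd, by omega⟩
      · rw [qnode_mid r d le_rfl (by omega), qnode_mid r d' le_rfl (by omega)] at h2
        simp only [Sum.inr.injEq, Prod.mk.injEq, Fin.mk.injEq] at h2
        rcases edg_eq d d' h2.1 with rfl | rfl
        · simp only [Prod.mk.injEq, Fin.ext_iff]
          exact ⟨trivial, by omega⟩
        · exact absurd h1 d'.snd_ne_fst


/-- Forward dart of an edge. -/
noncomputable def fd (e : G.edgeSet) : G.Dart := ⟨(o1 e, o2 e), adj_o e⟩

/-- Backward dart of an edge. -/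
noncomputable def bd (e : G.edgeSet) : G.Dart := ⟨(o2 e, o1 e), (adj_o e).symm⟩

lemma edg_fd (e : G.edgeSet) : edg (fd e) = e := Subtype.ext (mk_o1_o2 e)

lemma edg_bd (e : G.edgeSet) : edg (bd e) = e :=
  Subtype.ext (by show s(o2 e, o1 e) = (e : Sym2 V); rw [Sym2.eq_swap]; exact mk_o1_o2 e)

lemma fd_dir (e : G.edgeSet) : (fd e).fst = o1 (edg (fd e)) := by rw [edg_fd]; rfl

lemma bd_dir (e : G.edgeSet) : ¬ (bd e).fst = o1 (edg (bd e)) := by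
  rw [edg_bd]
  exact Ne.symm (o_ne e)

lemma psi_surj : Function.Surjective (psi (G := G) r) := by
  rintro ⟨⟨x, y⟩, hadj⟩
  rcases x with a | ⟨e, i⟩ <;> rcases y with b | ⟨f, j⟩
  · obtain ⟨hr1, hab⟩ := (subdiv_adj_inl_inl (r := r)).mp hadj
    refine ⟨(⟨(a, b), hab⟩, ⟨0, by omega⟩), Dart.ext _ _ (Prod.ext_iff.mpr ⟨?_, ?_⟩)⟩
    · show qnode r (⟨(a, b), hab⟩ : G.Dart) 0 = Sum.inl a
      rw [qnode_zero]
    · show qnode r (⟨(a, b), hab⟩ : G.Dart) (0 + 1) = Sum.inl b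
      rw [qnode_top r _ (by omega) (by omega)]
  · -- inl a, inr (f, j)
    have hr2 : 2 ≤ r := by have := j.is_lt; omega
    rcases (subdiv_adj_inl_inr (r := r)).mp hadj with ⟨ha, hj⟩ | ⟨ha, hj⟩
    · refine ⟨(fd f, ⟨0, by omega⟩), Dart.ext _ _ (Prod.ext_iff.mpr ⟨?_, ?_⟩)⟩
      · show qnode r (fd f) 0 = Sum.inl a
        rw [qnode_zero, ha]
        rfl
      · show qnode r (fd f) (0 + 1) = Sum.inr (f, j)
        rw [qnode_mid r _ le_rfl (by omega)]
        simp only [Sum.inr.injEq, Prod.mk.injEq, Fin.ext_iff, fin_val_mk]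
        refine ⟨edg_fd f, ?_⟩
        rw [if_pos (fd_dir f)]
        omega
    · refine ⟨(bd f, ⟨0, by omega⟩), Dart.ext _ _ (Prod.ext_iff.mpr ⟨?_, ?_⟩)⟩
      · show qnode r (bd f) 0 = Sum.inl a
        rw [qnode_zero, ha]
        rfl
      · show qnode r (bd f) (0 + 1) = Sum.inr (f, j)
        rw [qnode_mid r _ le_rfl (by omega)]
        simp only [Sum.inr.injEq, Prod.mk.injEq, Fin.ext_iff, fin_val_mk]
        refine ⟨edg_bd f, ?_⟩
        rw [if_neg (bd_dir f)]
        omega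
  · -- inr (e, i), inl b
    have hr2 : 2 ≤ r := by have := i.is_lt; omega
    rcases (subdiv_adj_inr_inl (r := r)).mp hadj with ⟨hb, hi⟩ | ⟨hb, hi⟩
    · refine ⟨(bd e, ⟨r - 1, by omega⟩), Dart.ext _ _ (Prod.ext_iff.mpr ⟨?_, ?_⟩)⟩
      · show qnode r (bd e) (r - 1) = Sum.inr (e, i)
        rw [qnode_mid r _ (by omega) le_rfl]
        simp only [Sum.inr.injEq, Prod.mk.injEq, Fin.ext_iff, fin_val_mk]
        refine ⟨edg_bd e, ?_⟩
        rw [if_neg (bd_dir e)]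
        omega
      · show qnode r (bd e) (r - 1 + 1) = Sum.inl b
        rw [qnode_top r _ (by omega) (by omega), hb]
        rfl
    · refine ⟨(fd e, ⟨r - 1, by omega⟩), Dart.ext _ _ (Prod.ext_iff.mpr ⟨?_, ?_⟩)⟩
      · show qnode r (fd e) (r - 1) = Sum.inr (e, i)
        rw [qnode_mid r _ (by omega) le_rfl]
        simp only [Sum.inr.injEq, Prod.mk.injEq, Fin.ext_iff, fin_val_mk]
        refine ⟨edg_fd e, ?_⟩
        rw [if_pos (fd_dir e)]
        omega
      · show qnode r (fd e) (r - 1 + 1) = Sum.inl b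
        rw [qnode_top r _ (by omega) (by omega), hb]
        rfl
  · -- inr (e, i), inr (f, j)
    have hr2 : 2 ≤ r := by have := i.is_lt; omega
    have hilt := i.is_lt
    have hjlt := j.is_lt
    rcases (subdiv_adj_inr_inr (r := r)).mp hadj with ⟨rfl, hij | hij⟩
    · refine ⟨(fd e, ⟨(i : ℕ) + 1, by omega⟩), Dart.ext _ _ (Prod.ext_iff.mpr ⟨?_, ?_⟩)⟩
      · show qnode r (fd e) ((i : ℕ) + 1) = Sum.inr (e, i)
        rw [qnode_mid r _ (by omega) (by omega)]
        simp only [Sum.inr.injEq, Prod.mk.injEq, Fin.ext_iff, fin_val_mk]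
        refine ⟨edg_fd e, ?_⟩
        rw [if_pos (fd_dir e)]
        omega
      · show qnode r (fd e) ((i : ℕ) + 1 + 1) = Sum.inr (e, j)
        rw [qnode_mid r _ (by omega) (by omega)]
        simp only [Sum.inr.injEq, Prod.mk.injEq, Fin.ext_iff, fin_val_mk]
        refine ⟨edg_fd e, ?_⟩
        rw [if_pos (fd_dir e)]
        omega
    · refine ⟨(bd e, ⟨r - 1 - (i : ℕ), by omega⟩), Dart.ext _ _ (Prod.ext_iff.mpr ⟨?_, ?_⟩)⟩
      · show qnode r (bd e) (r - 1 - (i : ℕ)) = Sum.inr (e, i)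
        rw [qnode_mid r _ (by omega) (by omega)]
        simp only [Sum.inr.injEq, Prod.mk.injEq, Fin.ext_iff, fin_val_mk]
        refine ⟨edg_bd e, ?_⟩
        rw [if_neg (bd_dir e)]
        omega
      · show qnode r (bd e) (r - 1 - (i : ℕ) + 1) = Sum.inr (e, j)
        rw [qnode_mid r _ (by omega) (by omega)]
        simp only [Sum.inr.injEq, Prod.mk.injEq, Fin.ext_iff, fin_val_mk]
        refine ⟨edg_bd e, ?_⟩
        rw [if_neg (bd_dir e)]
        omega


lemma psi_entry (d e : G.Dart) (i j : Fin r) :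
    nbMatrix (subdiv G r) (psi r (d, i)) (psi r (e, j)) =
      (if (j : ℕ) + 1 = (i : ℕ) ∧ e = d then 1 else 0) +
      (if (i : ℕ) = 0 ∧ (j : ℕ) = r - 1 then nbMatrix G d e else 0) := by
  have hr : 1 ≤ r := by have := i.is_lt; omega
  have hilt := i.is_lt
  have hjlt := j.is_lt
  have key : (qnode r e ((j : ℕ) + 1) = qnode r d (i : ℕ) ∧
      ¬ qnode r e (j : ℕ) = qnode r d ((i : ℕ) + 1)) ↔
      (((j : ℕ) + 1 = (i : ℕ) ∧ e = d) ∨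
        (((i : ℕ) = 0 ∧ (j : ℕ) = r - 1) ∧
          (e.toProd.2 = d.toProd.1 ∧ ¬ e.toProd.1 = d.toProd.2))) := by
    constructor
    · rintro ⟨hP, hQ⟩
      by_cases hi : (i : ℕ) = 0
      · right
        rw [hi, qnode_zero] at hP
        by_cases hjm : (j : ℕ) + 1 ≤ r - 1
        · rw [qnode_mid r e (by omega) hjm] at hP
          exact absurd hP (by simp)
        · have hj : (j : ℕ) = r - 1 := by omega
          rw [qnode_top r e hr (by omega)] at hP
          simp only [Sum.inl.injEq] at hP
          refine ⟨⟨hi, hj⟩, hP, ?_⟩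
          intro hef
          have hed : e = d.symm := Dart.ext _ _ (Prod.ext_iff.mpr ⟨hef, hP⟩)
          apply hQ
          rw [hed, qnode_symm r d hr (by omega)]
          congr 1
          omega
      · left
        have him : 1 ≤ (i : ℕ) ∧ (i : ℕ) ≤ r - 1 := by omega
        by_cases hjm : (j : ℕ) + 1 ≤ r - 1
        swap
        · exfalso
          rw [qnode_top r e hr (by omega), qnode_mid r d him.1 him.2] at hP
          exact absurd hP (by simp)
        · have hP' := hP
          rw [qnode_mid r e (by omega) hjm, qnode_mid r d him.1 him.2] at hP'
          simp only [Sum.inr.injEq, Prod.mk.injEq, Fin.mk.injEq] at hP'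
          rcases edg_eq e d hP'.1 with rfl | rfl
          · refine ⟨?_, rfl⟩
            have hv := hP'.2
            split at hv <;> omega
          · exfalso
            apply hQ
            rw [qnode_symm r d hr (by omega)] at hP
            have he1 : r - ((j : ℕ) + 1) = (i : ℕ) :=
              qnode_inj r d hr (by omega) (by omega) hP
            rw [qnode_symm r d hr (by omega)]
            congr 1
            omega
    · rintro (⟨hji, rfl⟩ | ⟨⟨hi, hj⟩, hsnd, hfst⟩)
      · constructor
        · rw [hji]
        · intro hEq
          have := qnode_inj r e hr (by omega) (by omega) hEq
          omega
      · constructor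
        · rw [hi, qnode_zero, hj, qnode_top r e hr (by omega)]
          exact congrArg Sum.inl hsnd
        · by_cases hr1 : r = 1
          · rw [show (j : ℕ) = 0 by omega, qnode_zero,
              qnode_top r d hr (by omega)]
            simp only [ne_eq, Sum.inl.injEq]
            exact hfst
          · intro hEq
            rw [qnode_mid r e (by omega) (by omega),
              qnode_mid r d (by omega) (by omega)] at hEq
            simp only [Sum.inr.injEq, Prod.mk.injEq, Fin.mk.injEq] at hEq
            rcases edg_eq e d hEq.1 with rfl | rfl
            · exact e.snd_ne_fst hsnd
            · exact hfst rfl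
  show (if qnode r e ((j : ℕ) + 1) = qnode r d (i : ℕ) ∧
      ¬ qnode r e (j : ℕ) = qnode r d ((i : ℕ) + 1) then (1 : ℂ) else 0) = _
  rw [if_congr key rfl rfl]
  by_cases h1 : (j : ℕ) + 1 = (i : ℕ) ∧ e = d <;>
    by_cases h2 : (i : ℕ) = 0 ∧ (j : ℕ) = r - 1 <;>
      by_cases h3 : e.toProd.2 = d.toProd.1 ∧ ¬ e.toProd.1 = d.toProd.2 <;>
        simp [nbMatrix, h1, h2, h3] <;> omega

end NBaux

namespace NBaux

lemma eval_charpoly {m : Type} [Fintype m] [DecidableEq m] (M : Matrix m m ℂ) (t : ℂ) :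
    (Matrix.charpoly M).eval t = (t • (1 : Matrix m m ℂ) - M).det := by
  rw [Matrix.charpoly, ← Polynomial.coe_evalRingHom, RingHom.map_det]
  congr 1
  ext a b
  by_cases hab : a = b <;>
    simp [Matrix.charmatrix_apply, hab, Matrix.one_apply, Matrix.diagonal]

lemma cmat_charpoly {n : Type} [Fintype n] [DecidableEq n] (r : ℕ) (hr : 1 ≤ r)
    (B : Matrix n n ℂ) :
    (cmat r B).charpoly = B.charpoly.comp (Polynomial.X ^ r) := by
  apply Polynomial.eq_of_infinite_eval_eq
  apply Set.Infinite.mono (s := {x : ℂ | x ≠ 0})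
  · intro t ht
    simp only [Set.mem_setOf_eq] at ht ⊢
    rw [eval_charpoly, Polynomial.eval_comp, Polynomial.eval_pow, Polynomial.eval_X,
      eval_charpoly]
    exact cmat_det r hr B t ht
  · exact Set.Finite.infinite_compl (Set.finite_singleton 0)

end NBaux

/-- If H is the r-subdivision of G then det(tI − B_H) = det(t^r I − B_G); in particular the
non-backtracking eigenvalues of H are exactly the r-th roots of those of G. -/
theorem charpoly_subdiv {V : Type} [Fintype V] [DecidableEq V]
    (G : SimpleGraph V) [DecidableRel G.Adj] (r : ℕ) (hr : 1 ≤ r) :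
    (nbMatrix (subdiv G r)).charpoly = (nbMatrix G).charpoly.comp (Polynomial.X ^ r) ∧
    ∀ mu : ℂ, (nbMatrix (subdiv G r)).charpoly.IsRoot mu ↔
      (nbMatrix G).charpoly.IsRoot (mu ^ r) := by
  classical
  let Φ : G.Dart × Fin r ≃ (subdiv G r).Dart :=
    Equiv.ofBijective (NBaux.psi r) ⟨NBaux.psi_inj r, NBaux.psi_surj r⟩
  have hM : nbMatrix (subdiv G r)
      = Matrix.reindex Φ Φ (NBaux.cmat r (nbMatrix G)) := by
    ext x y
    obtain ⟨⟨d, i⟩, rfl⟩ := Φ.surjective x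
    obtain ⟨⟨e, j⟩, rfl⟩ := Φ.surjective y
    rw [Matrix.reindex_apply, Matrix.submatrix_apply, Equiv.symm_apply_apply,
      Equiv.symm_apply_apply]
    exact NBaux.psi_entry r d e i j
  have h1 : (nbMatrix (subdiv G r)).charpoly
      = (nbMatrix G).charpoly.comp (Polynomial.X ^ r) := by
    rw [hM, Matrix.charpoly_reindex, NBaux.cmat_charpoly r hr]
  refine ⟨h1, fun mu => ?_⟩
  rw [h1]
  constructor <;> intro h <;>
    [rwa [Polynomial.IsRoot.def, Polynomial.eval_comp, Polynomial.eval_pow,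
        Polynomial.eval_X] at h;
     rwa [Polynomial.IsRoot.def, Polynomial.eval_comp, Polynomial.eval_pow,
        Polynomial.eval_X]]
end

section
/- (Non-leaky gluing) Let G and H be graphs with minimum degree ≥ 2, and let v be an eigenfunction of B_G with unitary eigenvalue λ. Let N = {k ∈ V(G) : Σ_i a_{ik} v_{i→k} = 0}, and form X by identifying some nodes of N with nodes of H (each identified pair consisting of one node of N and one node of H), keeping E(X) = E(G) ⊔ E(H). Then λ is an eigenvalue of B_X, with eigenfunction u equal to v on the edges coming from G and zero on the edges coming from H. -/
open SimpleGraph Matrix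

/-- Extension by zero of a function on the darts of a subgraph `G ≤ X` to the darts of `X`. -/
noncomputable def extendByZero {V : Type} [Fintype V] [DecidableEq V]
    (G X : SimpleGraph V) [DecidableRel G.Adj] (v : G.Dart → ℂ) (D : X.Dart) : ℂ :=
  if h : G.Adj D.toProd.1 D.toProd.2 then v ⟨D.toProd, h⟩ else 0

lemma sum_darts_sub {V : Type} [Fintype V] [DecidableEq V] (G X : SimpleGraph V)
    [DecidableRel G.Adj] [DecidableRel X.Adj] (hle : G ≤ X)
    (F : X.Dart → ℂ) (hF : ∀ D : X.Dart, ¬ G.Adj D.toProd.1 D.toProd.2 → F D = 0) :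
    ∑ D : X.Dart, F D = ∑ e : G.Dart, F ⟨e.toProd, hle e.adj⟩ := by
  classical
  set f : G.Dart → X.Dart := fun e => ⟨e.toProd, hle e.adj⟩ with hf
  have hinj : Function.Injective f := by
    intro a b h
    cases a; cases b
    simpa [hf, SimpleGraph.Dart.ext_iff] using h
  have h1 : ∑ e : G.Dart, F (f e) = ∑ D ∈ Finset.univ.image f, F D :=
    (Finset.sum_image (fun x _ y _ h => hinj h)).symm
  rw [show (∑ e : G.Dart, F ⟨e.toProd, hle e.adj⟩) = ∑ e : G.Dart, F (f e) from rfl, h1]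
  refine (Finset.sum_subset (Finset.subset_univ _) ?_).symm
  intro D _ hD
  refine hF D fun h => hD ?_
  refine Finset.mem_image.mpr ⟨⟨D.toProd, h⟩, Finset.mem_univ _, ?_⟩
  cases D; rfl

/-- **Non-leaky gluing.** Model the gluing of a graph `G` to a graph `H` along nodes of
`N(G, v) = {k : (v into k) = 0}` by realizing `G` and `H` as edge-disjoint (spanning)
subgraphs of the glued graph `X = G ⊔ H`: the identified nodes are exactly those incident
to both an edge of `G` and an edge of `H`, and every such node is required to lie in
`N(G, v)`; the edge set of `X` is the disjoint union of those of `G` and `H`.  If `G` and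
`H` have minimum degree ≥ 2 (on the nodes they touch) and `v` is an eigenfunction of `B_G`
with unitary eigenvalue `λ`, then `λ` is an eigenvalue of `B_X`, with eigenfunction `u`
equal to `v` on the darts coming from `G` and zero on the darts coming from `H`. -/
theorem non_leaky_gluing {V : Type} [Fintype V] [DecidableEq V]
    (G H : SimpleGraph V) [DecidableRel G.Adj] [DecidableRel H.Adj]
    (hdisj : Disjoint G H)
    (hGmin : ∀ k : V, (∃ x, G.Adj k x) → 2 ≤ G.degree k)
    (hHmin : ∀ k : V, (∃ y, H.Adj k y) → 2 ≤ H.degree k)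
    (v : G.Dart → ℂ) (hv0 : v ≠ 0) (lam : ℂ) (hlam : ‖lam‖ = 1)
    (hv : (nbMatrix G).mulVec v = lam • v)
    (hglue : ∀ k : V, (∃ x, G.Adj k x) → (∃ y, H.Adj k y) →
      (∑ e : G.Dart, if e.toProd.2 = k then v e else 0) = 0) :
    extendByZero G (G ⊔ H) v ≠ 0 ∧
    (nbMatrix (G ⊔ H)).mulVec (extendByZero G (G ⊔ H) v) =
      lam • extendByZero G (G ⊔ H) v := by
  classical
  have hle : G ≤ G ⊔ H := le_sup_left
  have hdis : ∀ a b : V, G.Adj a b → H.Adj a b → False := by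
    intro a b hg hh
    have h := disjoint_iff_inf_le.mp hdisj (⟨hg, hh⟩ : (G ⊓ H).Adj a b)
    simpa using h
  have huG : ∀ (e : G.Dart), extendByZero G (G ⊔ H) v ⟨e.toProd, hle e.adj⟩ = v e := by
    intro e
    cases e with
    | mk p hp => simp [extendByZero, hp]
  constructor
  · intro h
    obtain ⟨e, he⟩ := Function.ne_iff.mp hv0
    apply he
    have := congrFun h ⟨e.toProd, hle e.adj⟩
    rwa [huG] at this
  · funext d
    simp only [mulVec, dotProduct, Pi.smul_apply, smul_eq_mul]
    rw [sum_darts_sub G (G ⊔ H) hle _ (fun D hD => by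
      simp [nbMatrix, extendByZero, hD])]
    rcases (SimpleGraph.sup_adj G H d.toProd.1 d.toProd.2).mp d.adj with hg | hh
    · -- d comes from G
      have key := congrFun hv (⟨d.toProd, hg⟩ : G.Dart)
      simp only [mulVec, dotProduct, Pi.smul_apply, smul_eq_mul] at key
      have hd : extendByZero G (G ⊔ H) v d = v ⟨d.toProd, hg⟩ := by
        simp [extendByZero, hg]
      rw [hd, ← key]
      apply Finset.sum_congr rfl
      intro e _
      rw [huG]
      simp [nbMatrix]
    · -- d comes from H
      have hd : extendByZero G (G ⊔ H) v d = 0 := by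
        simp only [extendByZero]
        exact dif_neg fun h => hdis _ _ h hh
      rw [hd, mul_zero]
      by_cases hx : ∃ x, G.Adj d.toProd.1 x
      · rw [← hglue d.toProd.1 hx ⟨d.toProd.2, hh⟩]
        apply Finset.sum_congr rfl
        intro e _
        rw [huG]
        simp only [nbMatrix]
        by_cases h2 : e.toProd.2 = d.toProd.1
        · have h1 : e.toProd.1 ≠ d.toProd.2 := by
            intro h1
            apply hdis e.toProd.1 e.toProd.2 e.adj
            rw [h1, h2]; exact hh.symm
          simp [h2, h1]
        · simp [h2]
      · apply Finset.sum_eq_zero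
        intro e _
        have h2 : e.toProd.2 ≠ d.toProd.1 := fun h => hx ⟨e.toProd.1, h ▸ e.adj.symm⟩
        simp [nbMatrix, h2, huG]
end
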